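/- arXiv:2110.14062 — 2 statements merged into one kernel-verified Lean document; each statement's English description precedes it below -/
import Mathlib

section
/- Let P ⊆ ℝⁿ be a polytope and v ∈ ℝⁿ such that (P,v) is quasi-positively oriented. Then for every z ∈ P the function φ(x,y) = ⟨x−y, v⟩ attains its minimum on the fiber π⁻¹(z) = {(x,y) ∈ P×P : x+y = 2z} at the unique point (bot(P∩ρ_zP), top(P∩ρ_zP)); the resulting section Δ_{(P,v)} : z ↦ (bot(P∩ρ_zP), top(P∩ρ_zP)) of π agrees with the set-theoretic diagonal z ↦ (z,z) on the vertices of P and is homotopic to it, via the homotopy H(z,t) = (1−t)(z,z) + t·Δ_{(P,v)}(z). -/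
open scoped BigOperators

noncomputable section

/-- Vectors in `ℝⁿ`. -/
abbrev Vec (n : ℕ) := Fin n → ℝ

/-- The standard scalar product on `ℝⁿ`. -/
def dot {n : ℕ} (x y : Vec n) : ℝ := ∑ i, x i * y i

/-- A polytope is the convex hull of a finite set of points. -/
def IsPolytope {n : ℕ} (P : Set (Vec n)) : Prop :=
  ∃ S : Finset (Vec n), P = convexHull ℝ (S : Set (Vec n))

/-- A face of `P`: either `P` itself (take `c = 0`) or the subset of `P` where some linear
functional attains its maximum over `P`. -/
def IsFace {n : ℕ} (P F : Set (Vec n)) : Prop :=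
  ∃ c : Vec n, F = {x ∈ P | ∀ y ∈ P, dot c y ≤ dot c x}

/-- Dimension of a subset of `ℝⁿ`: the rank of the direction of its affine span. -/
noncomputable def sdim {n : ℕ} (A : Set (Vec n)) : ℕ :=
  Module.finrank ℝ (affineSpan ℝ A).direction

/-- The normal cone of a face `F` of `P`. -/
def normalCone {n : ℕ} (P F : Set (Vec n)) : Set (Vec n) :=
  {c | F ⊆ {x ∈ P | ∀ y ∈ P, dot c y ≤ dot c x}}

/-- `coneOf X`: nonnegative linear combinations of finitely many elements of `X`. -/
def coneOf {n : ℕ} (X : Set (Vec n)) : Set (Vec n) :=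
  {v | ∃ (k : ℕ) (x : Fin k → Vec n) (l : Fin k → ℝ),
      (∀ i, x i ∈ X) ∧ (∀ i, 0 ≤ l i) ∧ v = ∑ i, l i • x i}

/-- The reflection `ρ_z P = 2z - P` of `P` with respect to `z`. -/
def reflP {n : ℕ} (z : Vec n) (P : Set (Vec n)) : Set (Vec n) :=
  (fun x => (2 : ℝ) • z - x) '' P

/-- An edge is a 1-dimensional face. -/
def IsEdge {n : ℕ} (P E : Set (Vec n)) : Prop := IsFace P E ∧ sdim E = 1

/-- `(P, v)` is oriented if `v` is not perpendicular to any edge of `P`. -/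
def Oriented {n : ℕ} (P : Set (Vec n)) (v : Vec n) : Prop :=
  ∀ E, IsEdge P E → ∀ d ∈ (affineSpan ℝ E).direction, d ≠ 0 → dot d v ≠ 0

/-- `(P, v)` is positively oriented if `(P ∩ ρ_z P, v)` is oriented for every `z ∈ P`. -/
def PosOriented {n : ℕ} (P : Set (Vec n)) (v : Vec n) : Prop :=
  ∀ z ∈ P, Oriented (P ∩ reflP z P) v

/-- `x` is the minimizer of `⟨-, v⟩` on `P`. -/
def IsBotOf {n : ℕ} (P : Set (Vec n)) (v x : Vec n) : Prop :=
  x ∈ P ∧ ∀ y ∈ P, dot v x ≤ dot v y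

/-- `x` is the maximizer of `⟨-, v⟩` on `P`. -/
def IsTopOf {n : ℕ} (P : Set (Vec n)) (v x : Vec n) : Prop :=
  x ∈ P ∧ ∀ y ∈ P, dot v y ≤ dot v x

/-- `(P, v)` is quasi-oriented if `⟨-, v⟩` has a unique minimizer and a unique maximizer on `P`. -/
def QuasiOriented {n : ℕ} (P : Set (Vec n)) (v : Vec n) : Prop :=
  (∃! x, IsBotOf P v x) ∧ (∃! x, IsTopOf P v x)

/-- `(P, v)` is quasi-positively oriented if `(P ∩ ρ_z P, v)` is quasi-oriented for all `z ∈ P`. -/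
def QuasiPosOriented {n : ℕ} (P : Set (Vec n)) (v : Vec n) : Prop :=
  ∀ z ∈ P, QuasiOriented (P ∩ reflP z P) v

/-- The polytope `P^φ = π^φ(P × P) ⊆ ℝ^{n+1}`, where `π^φ(x,y) = ((x+y)/2, ⟨x - y, v⟩)`. -/
def Pphi {n : ℕ} (P : Set (Vec n)) (v : Vec n) : Set (Vec (n + 1)) :=
  {w | ∃ x ∈ P, ∃ y ∈ P, w = Fin.snoc ((1 / 2 : ℝ) • (x + y)) (dot (x - y) v)}

/-- The pair of faces `(F, G)` belongs to `F^φ`: there are no `x ∈ F`, `y ∈ G`, `λ > 0` with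
`(π(x,y), φ(x,y) - λ) ∈ P^φ`. -/
def InFphi {n : ℕ} (P : Set (Vec n)) (v : Vec n) (F G : Set (Vec n)) : Prop :=
  ¬ ∃ x ∈ F, ∃ y ∈ G, ∃ lam : ℝ, 0 < lam ∧
      (Fin.snoc ((1 / 2 : ℝ) • (x + y)) (dot (x - y) v - lam) : Vec (n + 1)) ∈ Pphi P v

/-- The set `(A + B)/2`. -/
def avgSet {n : ℕ} (A B : Set (Vec n)) : Set (Vec n) :=
  {z | ∃ x ∈ A, ∃ y ∈ B, z = (1 / 2 : ℝ) • (x + y)}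

/-- The coherent subdivision `π(F^φ)` is tight. -/
def TightSub {n : ℕ} (P : Set (Vec n)) (v : Vec n) : Prop :=
  ∀ F G : Set (Vec n), IsFace P F → IsFace P G → F.Nonempty → G.Nonempty →
    InFphi P v F G → sdim F + sdim G = sdim (avgSet F G)

/-- `d` is a direction of an edge of `P ∩ ρ_z P` for some `z ∈ P`; the hyperplanes of the
fundamental hyperplane arrangement `H_P` are the orthogonal complements of such directions. -/
def EdgeDir {n : ℕ} (P : Set (Vec n)) (d : Vec n) : Prop :=
  d ≠ 0 ∧ ∃ z ∈ P, ∃ E, IsEdge (P ∩ reflP z P) E ∧ d ∈ (affineSpan ℝ E).direction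

/-- The cone `cone(-N_P(F) ∪ N_P(G))`. -/
def diagCone {n : ℕ} (P F G : Set (Vec n)) : Set (Vec n) :=
  coneOf ((Neg.neg '' normalCone P F) ∪ normalCone P G)


/-- The point of `P` minimizing `⟨-, v⟩` (when it exists and is unique). -/
noncomputable def botPt {n : ℕ} (P : Set (Vec n)) (v : Vec n) : Vec n :=
  Classical.epsilon (IsBotOf P v)

/-- The point of `P` maximizing `⟨-, v⟩` (when it exists and is unique). -/
noncomputable def topPt {n : ℕ} (P : Set (Vec n)) (v : Vec n) : Vec n :=
  Classical.epsilon (IsTopOf P v)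

lemma dot_comm {n} (x y : Vec n) : dot x y = dot y x := by
  simp [dot, mul_comm]

lemma dot_sub_left {n} (x y v : Vec n) : dot (x - y) v = dot x v - dot y v := by
  simp [dot, sub_mul, Finset.sum_sub_distrib]

lemma dot_sub_right {n} (v x y : Vec n) : dot v (x - y) = dot v x - dot v y := by
  simp [dot, mul_sub, Finset.sum_sub_distrib]

lemma dot_smul_right {n} (v : Vec n) (c : ℝ) (x : Vec n) : dot v (c • x) = c * dot v x := by
  simp only [dot, Finset.mul_sum, Pi.smul_apply, smul_eq_mul]
  exact Finset.sum_congr rfl fun i _ => by ring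

lemma dot_continuous {n} (v : Vec n) : Continuous (fun x => dot v x) := by
  unfold dot
  exact continuous_finset_sum _ fun i _ => continuous_const.mul (continuous_apply i)

lemma mem_inter_refl_iff {n} {P : Set (Vec n)} {z x : Vec n} :
    x ∈ P ∩ reflP z P ↔ x ∈ P ∧ (2:ℝ) • z - x ∈ P := by
  constructor
  · rintro ⟨h1, y, hy, rfl⟩
    simpa [sub_sub_cancel] using ⟨h1, hy⟩
  · rintro ⟨h1, h2⟩
    exact ⟨h1, ⟨(2:ℝ) • z - x, h2, by module⟩⟩

/-- `q` admits no decomposition with positive weight on `z`. -/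
def NoPos {n : ℕ} (H : Set (Vec n)) (z q : Vec n) : Prop :=
  ∀ μ : ℝ, 0 < μ → μ ≤ 1 → ∀ w ∈ H, q ≠ μ • z + (1 - μ) • w

lemma decompose {n : ℕ} {H : Set (Vec n)} (hHconv : Convex ℝ H) (hHcomp : IsCompact H)
    {z : Vec n} (hz : z ∈ H) {ε : ℝ} (hε : 0 < ε) {p : Vec n} (hp : p ∈ H)
    (hbad : ∀ w ∈ H, p ≠ (1 - ε) • z + ε • w) :
    ∃ q ∈ H, NoPos H z q ∧ dist q z ≤ dist p z / ε := by
  set A : Set (ℝ × Vec n) :=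
    (Set.Icc (0:ℝ) 1 ×ˢ H) ∩ {x | p = x.1 • z + (1 - x.1) • x.2} with hA
  have hAcomp : IsCompact A := by
    apply ((isCompact_Icc).prod hHcomp).inter_right
    have hc : Continuous fun x : ℝ × Vec n => x.1 • z + (1 - x.1) • x.2 :=
      (continuous_fst.smul continuous_const).add
        ((continuous_const.sub continuous_fst).smul continuous_snd)
    exact isClosed_eq continuous_const hc
  have hAne : A.Nonempty := ⟨(0, p), ⟨⟨le_refl 0, zero_le_one⟩, hp⟩, by simp⟩
  obtain ⟨⟨μ, q⟩, hmem, hmax⟩ := hAcomp.exists_isMaxOn hAne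
    (continuous_fst.continuousOn : ContinuousOn (fun x : ℝ × Vec n => x.1) A)
  obtain ⟨⟨hμIcc, hqH⟩, heq⟩ := hmem
  have hμ0 : 0 ≤ μ := hμIcc.1
  have hμ1 : μ ≤ 1 := hμIcc.2
  -- μ ≤ 1 - ε
  have hμle : μ ≤ 1 - ε := by
    by_contra hgt
    push_neg at hgt
    have ha : (0:ℝ) ≤ (μ - (1 - ε))/ε := div_nonneg (by linarith) (le_of_lt hε)
    have hb : (0:ℝ) ≤ (1 - μ)/ε := div_nonneg (by linarith) (le_of_lt hε)
    have hab : (μ - (1 - ε))/ε + (1 - μ)/ε = 1 := by field_simp; ring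
    have hw' : ((μ - (1 - ε))/ε) • z + ((1 - μ)/ε) • q ∈ H := hHconv hz hqH ha hb hab
    refine hbad _ hw' ?_
    rw [heq]
    have hεne : ε ≠ 0 := ne_of_gt hε
    rw [smul_add, smul_smul, smul_smul]
    rw [mul_div_cancel₀ _ hεne, mul_div_cancel₀ _ hεne]
    module
  have h1μ : ε ≤ 1 - μ := by linarith
  have h1μpos : (0:ℝ) < 1 - μ := lt_of_lt_of_le hε h1μ
  refine ⟨q, hqH, ?_, ?_⟩
  · -- NoPos
    intro ν hν hν1 w hw hqeq
    have hmem2 : ((μ + (1 - μ) * ν, w) : ℝ × Vec n) ∈ A := by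
      constructor
      · refine ⟨?_, hw⟩
        show μ + (1 - μ) * ν ∈ Set.Icc (0:ℝ) 1
        constructor
        · nlinarith
        · nlinarith
      · show p = (μ + (1 - μ) * ν) • z + (1 - (μ + (1 - μ) * ν)) • w
        rw [heq, hqeq]
        module
    have := hmax hmem2
    simp only [Set.mem_setOf_eq] at this
    have : μ + (1 - μ) * ν ≤ μ := this
    nlinarith
  · -- dist bound
    have hpz : p - z = (1 - μ) • (q - z) := by rw [heq]; module
    have hd : dist p z = (1 - μ) * dist q z := by
      rw [dist_eq_norm, dist_eq_norm, hpz, norm_smul, Real.norm_eq_abs,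
        abs_of_pos h1μpos]
    rw [hd, le_div_iff₀ hε]
    nlinarith [dist_nonneg (x := q) (y := z)]

lemma nopos_missing {n} {S : Finset (Vec n)} {z q : Vec n} {α : Vec n → ℝ}
    (hα0 : ∀ s ∈ S, 0 ≤ α s) (hα1 : ∑ s ∈ S, α s = 1) (hαz : ∑ s ∈ S, α s • s = z)
    (hq : q ∈ convexHull ℝ (S : Set (Vec n)))
    (hnp : NoPos (convexHull ℝ (S : Set (Vec n))) z q) :
    ∃ s ∈ S, 0 < α s ∧ q ∈ convexHull ℝ ((S.erase s : Finset (Vec n)) : Set (Vec n)) := by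
  obtain ⟨lam, hlam0, hlam1, hlamq⟩ := Finset.mem_convexHull'.mp hq
  by_cases hzero : ∃ s ∈ S, 0 < α s ∧ lam s = 0
  · obtain ⟨s, hs, hαs, hls⟩ := hzero
    refine ⟨s, hs, hαs, Finset.mem_convexHull'.mpr ⟨lam, ?_, ?_, ?_⟩⟩
    · exact fun y hy => hlam0 y (Finset.mem_of_mem_erase hy)
    · rw [← Finset.sum_erase_add S _ hs] at hlam1
      simpa [hls] using hlam1
    · rw [← Finset.sum_erase_add S _ hs] at hlamq
      simpa [hls] using hlamq
  · exfalso
    push_neg at hzero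
    -- all lam s > 0 on the support of α
    set T := S.filter (fun s => 0 < α s) with hT
    have hTne : T.Nonempty := by
      by_contra hemp
      rw [Finset.not_nonempty_iff_eq_empty] at hemp
      have : ∑ s ∈ S, α s = 0 := by
        apply Finset.sum_eq_zero
        intro s hs
        by_contra hne
        have : 0 < α s := lt_of_le_of_ne (hα0 s hs) (Ne.symm hne)
        have : s ∈ T := Finset.mem_filter.mpr ⟨hs, this⟩
        simp [hemp] at this
      rw [hα1] at this; norm_num at this
    set c := T.inf' hTne (fun s => lam s / α s) with hc
    have hcpos : 0 < c := by
      rw [hc, Finset.lt_inf'_iff]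
      intro s hs
      obtain ⟨hsS, hαs⟩ := Finset.mem_filter.mp hs
      have hls : 0 < lam s :=
        lt_of_le_of_ne (hlam0 s hsS) (Ne.symm (hzero s hsS hαs))
      positivity
    set μ := min c (1/2 : ℝ) with hμ
    have hμpos : 0 < μ := lt_min hcpos (by norm_num)
    have hμhalf : μ ≤ 1/2 := min_le_right _ _
    have hμ1 : (0:ℝ) < 1 - μ := by linarith
    -- weights for w
    have hkey : ∀ s ∈ S, 0 ≤ lam s - μ * α s := by
      intro s hs
      by_cases hαs : 0 < α s
      · have hsT : s ∈ T := Finset.mem_filter.mpr ⟨hs, hαs⟩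
        have : c ≤ lam s / α s := Finset.inf'_le _ hsT
        have : μ ≤ lam s / α s := le_trans (min_le_left _ _) this
        rw [le_div_iff₀ hαs] at this
        linarith
      · have : α s = 0 := le_antisymm (not_lt.mp hαs) (hα0 s hs)
        rw [this]
        simpa using hlam0 s hs
    set w := (1 - μ)⁻¹ • (q - μ • z) with hw
    have hwH : w ∈ convexHull ℝ (S : Set (Vec n)) := by
      apply Finset.mem_convexHull'.mpr
      refine ⟨fun s => (lam s - μ * α s) / (1 - μ), ?_, ?_, ?_⟩
      · intro y hy
        exact div_nonneg (hkey y hy) (le_of_lt hμ1)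
      · rw [← Finset.sum_div]
        rw [Finset.sum_sub_distrib, hlam1, ← Finset.mul_sum, hα1]
        field_simp
      · rw [hw, ← hlamq, ← hαz]
        rw [Finset.smul_sum, ← Finset.sum_sub_distrib, Finset.smul_sum]
        apply Finset.sum_congr rfl
        intro s hs
        show ((lam s - μ * α s) / (1 - μ)) • s = (1 - μ)⁻¹ • (lam s • s - μ • α s • s)
        rw [div_eq_inv_mul]
        module
    exact hnp μ hμpos (by linarith) w hwH (by rw [hw]; rw [smul_inv_smul₀ (ne_of_gt hμ1)]; module)

lemma conic_aux {n : ℕ} : ∀ (N : ℕ) (S : Finset (Vec n)), S.card ≤ N → ∀ z : Vec n,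
    z ∈ convexHull ℝ (S : Set (Vec n)) → ∀ ε : ℝ, 0 < ε →
    ∃ δ > 0, ∀ p ∈ convexHull ℝ (S : Set (Vec n)), dist p z < δ →
      ∃ w ∈ convexHull ℝ (S : Set (Vec n)), p = (1 - ε) • z + ε • w := by
  intro N
  induction N with
  | zero =>
    intro S hcard z hz ε hε
    rw [Nat.le_zero, Finset.card_eq_zero] at hcard
    subst hcard
    simp at hz
  | succ N ih =>
    intro S hcard z hz ε hε
    by_contra hcon
    push_neg at hcon
    obtain ⟨α, hα0, hα1, hαz⟩ := Finset.mem_convexHull'.mp hz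
    have hHconv : Convex ℝ (convexHull ℝ (S : Set (Vec n))) := convex_convexHull ℝ _
    have hHcomp : IsCompact (convexHull ℝ (S : Set (Vec n))) :=
      (S.finite_toSet).isCompact_convexHull ℝ
    -- key step: arbitrarily close "NoPos" points living on a proper subpolytope
    have hK : ∀ δ : ℝ, 0 < δ → ∃ s ∈ S, 0 < α s ∧
        ∃ q ∈ convexHull ℝ ((S.erase s : Finset (Vec n)) : Set (Vec n)),
          dist q z < δ ∧ NoPos (convexHull ℝ (S : Set (Vec n))) z q := by
      intro δ hδ
      obtain ⟨p, hp, hpd, hbad⟩ := hcon (ε * δ) (by positivity)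
      obtain ⟨q, hq, hnp, hqd⟩ := decompose hHconv hHcomp hz hε hp hbad
      obtain ⟨s, hs, hαs, hqe⟩ := nopos_missing hα0 hα1 hαz hq hnp
      refine ⟨s, hs, hαs, q, hqe, ?_, hnp⟩
      have h2 : dist p z / ε < δ := by
        rw [div_lt_iff₀ hε, mul_comm]; exact hpd
      linarith
    have hB : ∃ s ∈ S, 0 < α s ∧ ∀ δ : ℝ, 0 < δ →
        ∃ q ∈ convexHull ℝ ((S.erase s : Finset (Vec n)) : Set (Vec n)),
          dist q z < δ ∧ NoPos (convexHull ℝ (S : Set (Vec n))) z q := by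
      by_contra hno
      push_neg at hno
      have hno' : ∀ s : Vec n, ∃ δ : ℝ, 0 < δ ∧ (s ∈ S → 0 < α s →
          ∀ q ∈ convexHull ℝ ((S.erase s : Finset (Vec n)) : Set (Vec n)),
            dist q z < δ → ¬ NoPos (convexHull ℝ (S : Set (Vec n))) z q) := by
        intro s
        by_cases hsS : s ∈ S ∧ 0 < α s
        · obtain ⟨δ, hδ, hprop⟩ := hno s hsS.1 hsS.2
          exact ⟨δ, hδ, fun _ _ => hprop⟩
        · exact ⟨1, one_pos, fun h1 h2 => absurd ⟨h1, h2⟩ hsS⟩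
      choose δf hδf using hno'
      have hTne : (S.filter (fun s => 0 < α s)).Nonempty := by
        by_contra hemp
        rw [Finset.not_nonempty_iff_eq_empty] at hemp
        have : ∑ s ∈ S, α s = 0 := by
          apply Finset.sum_eq_zero
          intro s hs
          by_contra hne
          have h1 : 0 < α s := lt_of_le_of_ne (hα0 s hs) (Ne.symm hne)
          have h2 : s ∈ S.filter (fun s => 0 < α s) := Finset.mem_filter.mpr ⟨hs, h1⟩
          simp [hemp] at h2
        rw [hα1] at this; norm_num at this
      have hδm : 0 < (S.filter (fun s => 0 < α s)).inf' hTne δf := by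
        rw [Finset.lt_inf'_iff]
        exact fun s _ => (hδf s).1
      obtain ⟨s, hs, hαs, q, hq, hqd, hnp⟩ := hK _ hδm
      have hsT : s ∈ S.filter (fun s => 0 < α s) := Finset.mem_filter.mpr ⟨hs, hαs⟩
      exact (hδf s).2 hs hαs q hq (lt_of_lt_of_le hqd (Finset.inf'_le _ hsT)) hnp
    obtain ⟨s0, hs0S, hαs0, hB0⟩ := hB
    have hclosed : IsClosed (convexHull ℝ ((S.erase s0 : Finset (Vec n)) : Set (Vec n))) :=
      (Finset.finite_toSet _).isClosed_convexHull ℝ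
    have hzmem : z ∈ convexHull ℝ ((S.erase s0 : Finset (Vec n)) : Set (Vec n)) := by
      rw [← hclosed.closure_eq, Metric.mem_closure_iff]
      intro δ hδ
      obtain ⟨q, hq, hqd, -⟩ := hB0 δ hδ
      exact ⟨q, hq, by rwa [dist_comm]⟩
    have hcard' : (S.erase s0).card ≤ N := by
      have := Finset.card_erase_of_mem hs0S
      have := Finset.card_pos.mpr ⟨s0, hs0S⟩
      omega
    obtain ⟨δ', hδ', hprop⟩ := ih (S.erase s0) hcard' z hzmem (1/2) (by norm_num)
    obtain ⟨q, hq, hqd, hnp⟩ := hB0 δ' hδ'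
    obtain ⟨w, hw, hqe⟩ := hprop q hq hqd
    exact hnp (1/2) (by norm_num) (by norm_num) w
      (convexHull_mono (Finset.coe_subset.mpr (Finset.erase_subset s0 S)) hw)
      (by rw [hqe]; norm_num)


open Filter Topology

lemma exists_min_decomp {n : ℕ} {H : Set (Vec n)} (hcomp : IsCompact H)
    {z0 p : Vec n} (hp : p ∈ H) :
    ∃ t ∈ Set.Icc (0:ℝ) 1, ∃ w ∈ H, p = (1 - t) • z0 + t • w ∧
      ∀ t' ∈ Set.Icc (0:ℝ) 1, ∀ w' ∈ H, p = (1 - t') • z0 + t' • w' → t ≤ t' := by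
  set A : Set (ℝ × Vec n) := (Set.Icc (0:ℝ) 1 ×ˢ H) ∩ {x | p = (1 - x.1) • z0 + x.1 • x.2}
    with hA
  have hAcomp : IsCompact A := by
    apply (isCompact_Icc.prod hcomp).inter_right
    exact isClosed_eq continuous_const
      (((continuous_const.sub continuous_fst).smul continuous_const).add
        (continuous_fst.smul continuous_snd))
  have hAne : A.Nonempty := ⟨(1, p), ⟨⟨zero_le_one, le_refl 1⟩, hp⟩, by simp⟩
  obtain ⟨⟨t, w⟩, hmem, hmin⟩ := hAcomp.exists_isMinOn hAne
    (continuous_fst.continuousOn : ContinuousOn (fun x : ℝ × Vec n => x.1) A)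
  obtain ⟨⟨htI, hwH⟩, heq⟩ := hmem
  exact ⟨t, htI, w, hwH, heq,
    fun t' ht' w' hw' he' => hmin (a := (t', w')) ⟨⟨ht', hw'⟩, he'⟩⟩

lemma tendsto_decomp {n : ℕ} {S : Finset (Vec n)} {z0 : Vec n}
    (hz0 : z0 ∈ convexHull ℝ (S : Set (Vec n)))
    (zs : ℕ → Vec n) (hzs : ∀ k, zs k ∈ convexHull ℝ (S : Set (Vec n)))
    (hlim : Tendsto zs atTop (𝓝 z0)) :
    ∃ ts : ℕ → ℝ, ∃ us : ℕ → Vec n,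
      (∀ k, ts k ∈ Set.Icc (0:ℝ) 1 ∧ us k ∈ convexHull ℝ (S : Set (Vec n)) ∧
        zs k = (1 - ts k) • z0 + ts k • us k) ∧
      Tendsto ts atTop (𝓝 0) := by
  have hcomp : IsCompact (convexHull ℝ (S : Set (Vec n))) :=
    (S.finite_toSet).isCompact_convexHull ℝ
  have h := fun k => exists_min_decomp hcomp (z0 := z0) (hzs k)
  choose ts hts us hus heq hmin using h
  refine ⟨ts, us, fun k => ⟨hts k, hus k, heq k⟩, ?_⟩
  rw [Metric.tendsto_atTop]
  intro ε hε
  set ε' := min (ε/2) 1 with hε'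
  have hε'pos : 0 < ε' := lt_min (by linarith) one_pos
  have hε'le : ε' ≤ 1 := min_le_right _ _
  obtain ⟨δ, hδ, hprop⟩ := conic_aux S.card S (le_refl _) z0 hz0 ε' hε'pos
  rw [Metric.tendsto_atTop] at hlim
  obtain ⟨K, hK⟩ := hlim δ hδ
  refine ⟨K, fun k hk => ?_⟩
  obtain ⟨w, hw, hwe⟩ := hprop (zs k) (hzs k) (hK k hk)
  have h1 : ts k ≤ ε' := hmin k ε' ⟨le_of_lt hε'pos, hε'le⟩ w hw hwe
  have h0 : 0 ≤ ts k := (hts k).1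
  rw [Real.dist_eq, sub_zero, abs_of_nonneg h0]
  have h2 : ε' ≤ ε/2 := min_le_left _ _
  linarith

lemma bot_min_spec {n : ℕ} {P : Set (Vec n)} {v : Vec n} (h : ∃! x, IsBotOf P v x) :
    IsBotOf P v (botPt P v) := Classical.epsilon_spec h.exists

lemma top_max_spec {n : ℕ} {P : Set (Vec n)} {v : Vec n} (h : ∃! x, IsTopOf P v x) :
    IsTopOf P v (topPt P v) := Classical.epsilon_spec h.exists

lemma refl_mem_QQ {n : ℕ} {P : Set (Vec n)} {z x : Vec n} (hx : x ∈ P ∩ reflP z P) :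
    (2:ℝ) • z - x ∈ P ∩ reflP z P := by
  rw [mem_inter_refl_iff] at hx ⊢
  exact ⟨hx.2, by rw [sub_sub_cancel]; exact hx.1⟩

lemma dot_sub_v {n : ℕ} (x y v : Vec n) : dot (x - y) v = dot v x - dot v y := by
  rw [dot_sub_left, dot_comm x, dot_comm y]

lemma isTop_refl {n : ℕ} {P : Set (Vec n)} {v z b : Vec n}
    (hb : IsBotOf (P ∩ reflP z P) v b) :
    IsTopOf (P ∩ reflP z P) v ((2:ℝ) • z - b) := by
  refine ⟨refl_mem_QQ hb.1, ?_⟩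
  intro y hy
  have h1 := hb.2 _ (refl_mem_QQ hy)
  have e1 : dot v ((2:ℝ) • z - y) = 2 * dot v z - dot v y := by
    rw [dot_sub_right, dot_smul_right]
  have e2 : dot v ((2:ℝ) • z - b) = 2 * dot v z - dot v b := by
    rw [dot_sub_right, dot_smul_right]
  rw [e1] at h1; rw [e2]; linarith

lemma top_eq_refl_bot {n : ℕ} {P : Set (Vec n)} {v : Vec n}
    (hqpo : QuasiPosOriented P v) {z : Vec n} (hz : z ∈ P) :
    topPt (P ∩ reflP z P) v = (2:ℝ) • z - botPt (P ∩ reflP z P) v :=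
  (hqpo z hz).2.unique (top_max_spec (hqpo z hz).2)
    (isTop_refl (bot_min_spec (hqpo z hz).1))

lemma isBot_limit {n : ℕ} {P : Set (Vec n)} {v : Vec n} {S : Finset (Vec n)}
    (hPS : P = convexHull ℝ (S : Set (Vec n))) (hqpo : QuasiPosOriented P v)
    {z0 : Vec n} (hz0 : z0 ∈ P) (zs : ℕ → Vec n) (hzs : ∀ k, zs k ∈ P)
    (hlim : Tendsto zs atTop (𝓝 z0)) {bstar : Vec n}
    (hb : Tendsto (fun k => botPt (P ∩ reflP (zs k) P) v) atTop (𝓝 bstar)) :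
    IsBotOf (P ∩ reflP z0 P) v bstar := by
  have hcomp : IsCompact P := hPS ▸ (S.finite_toSet).isCompact_convexHull ℝ
  have hCl : IsClosed P := hcomp.isClosed
  have hConv : Convex ℝ P := hPS ▸ convex_convexHull ℝ _
  set bs := fun k => botPt (P ∩ reflP (zs k) P) v with hbs_def
  have hbs : ∀ k, IsBotOf (P ∩ reflP (zs k) P) v (bs k) :=
    fun k => bot_min_spec (hqpo (zs k) (hzs k)).1
  have hbsP : ∀ k, bs k ∈ P := fun k => (hbs k).1.1
  have hbstarP : bstar ∈ P := hCl.mem_of_tendsto hb (Filter.Eventually.of_forall hbsP)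
  have hreflP : ∀ k, (2:ℝ) • zs k - bs k ∈ P :=
    fun k => (mem_inter_refl_iff.mp (hbs k).1).2
  have hrefl_lim : Tendsto (fun k => (2:ℝ) • zs k - bs k) atTop (𝓝 ((2:ℝ) • z0 - bstar)) :=
    (hlim.const_smul (2:ℝ)).sub hb
  have hbstarQ : bstar ∈ P ∩ reflP z0 P :=
    mem_inter_refl_iff.mpr ⟨hbstarP,
      hCl.mem_of_tendsto hrefl_lim (Filter.Eventually.of_forall hreflP)⟩
  refine ⟨hbstarQ, ?_⟩
  intro y hy
  obtain ⟨hy1, hy2⟩ := mem_inter_refl_iff.mp hy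
  obtain ⟨ts, us, hdec, htend⟩ := tendsto_decomp (hPS ▸ hz0) zs
    (fun k => hPS ▸ hzs k) hlim
  set xs := fun k => (1 - ts k) • y + ts k • us k with hxs_def
  have husP : ∀ k, us k ∈ P := fun k => hPS ▸ (hdec k).2.1
  have hts0 : ∀ k, 0 ≤ ts k := fun k => (hdec k).1.1
  have hts1 : ∀ k, ts k ≤ 1 := fun k => (hdec k).1.2
  have hxsQ : ∀ k, xs k ∈ P ∩ reflP (zs k) P := by
    intro k
    rw [mem_inter_refl_iff]
    constructor
    · exact hConv hy1 (husP k) (by linarith [hts1 k]) (hts0 k) (by ring)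
    · have he : (2:ℝ) • zs k - xs k = (1 - ts k) • ((2:ℝ) • z0 - y) + ts k • us k := by
        rw [hxs_def]
        simp only
        rw [(hdec k).2.2]
        module
      rw [he]
      exact hConv hy2 (husP k) (by linarith [hts1 k]) (hts0 k) (by ring)
  have hle : ∀ k, dot v (bs k) ≤ dot v (xs k) := fun k => (hbs k).2 _ (hxsQ k)
  have hdotb : Tendsto (fun k => dot v (bs k)) atTop (𝓝 (dot v bstar)) :=
    ((dot_continuous v).tendsto bstar).comp hb
  have hxs_lim : Tendsto xs atTop (𝓝 y) := by
    obtain ⟨C, hC⟩ := Bornology.IsBounded.exists_norm_le (hcomp.isBounded)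
    have hsub : ∀ k, xs k - y = ts k • (us k - y) := by
      intro k; rw [hxs_def]; simp only; module
    have hnorm : ∀ k, ‖xs k - y‖ ≤ ts k * (C + ‖y‖) := by
      intro k
      rw [hsub k, norm_smul, Real.norm_eq_abs, abs_of_nonneg (hts0 k)]
      have : ‖us k - y‖ ≤ C + ‖y‖ := by
        calc ‖us k - y‖ ≤ ‖us k‖ + ‖y‖ := norm_sub_le _ _
          _ ≤ C + ‖y‖ := by have := hC _ (husP k); linarith
      exact mul_le_mul_of_nonneg_left this (hts0 k)
    have hg : Tendsto (fun k => ts k * (C + ‖y‖)) atTop (𝓝 0) := by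
      simpa using htend.mul_const (C + ‖y‖)
    have := squeeze_zero_norm hnorm hg
    exact tendsto_sub_nhds_zero_iff.mp this
  have hdotx : Tendsto (fun k => dot v (xs k)) atTop (𝓝 (dot v y)) :=
    ((dot_continuous v).tendsto y).comp hxs_lim
  exact le_of_tendsto_of_tendsto' hdotb hdotx hle

lemma cont_bot {n : ℕ} {P : Set (Vec n)} {v : Vec n} {S : Finset (Vec n)}
    (hPS : P = convexHull ℝ (S : Set (Vec n))) (hqpo : QuasiPosOriented P v) :
    ContinuousOn (fun z => botPt (P ∩ reflP z P) v) P := by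
  classical
  have hcomp : IsCompact P := hPS ▸ (S.finite_toSet).isCompact_convexHull ℝ
  intro z0 hz0
  unfold ContinuousWithinAt
  apply tendsto_of_subseq_tendsto
  intro ns hns
  have hmem : ∀ᶠ k in atTop, ns k ∈ P := hns self_mem_nhdsWithin
  have htend0 : Tendsto ns atTop (𝓝 z0) := hns.mono_right nhdsWithin_le_nhds
  set ys := fun k => if ns k ∈ P then ns k else z0 with hys_def
  have hysP : ∀ k, ys k ∈ P := by
    intro k
    rw [hys_def]
    by_cases h : ns k ∈ P <;> simp [h, hz0]
  have hyseq : ys =ᶠ[atTop] ns := by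
    filter_upwards [hmem] with k hk
    rw [hys_def]; simp [hk]
  have hyslim : Tendsto ys atTop (𝓝 z0) := Filter.Tendsto.congr' hyseq.symm htend0
  set bs := fun k => botPt (P ∩ reflP (ys k) P) v with hbs_def
  have hbsP : ∀ k, bs k ∈ P := fun k => (bot_min_spec (hqpo (ys k) (hysP k)).1).1.1
  obtain ⟨bstar, hbstarP, φ, hφmono, hφtend⟩ := hcomp.tendsto_subseq hbsP
  have hbot : IsBotOf (P ∩ reflP z0 P) v bstar :=
    isBot_limit hPS hqpo hz0 (fun k => ys (φ k)) (fun k => hysP _)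
      (hyslim.comp hφmono.tendsto_atTop) hφtend
  have hbeq : bstar = botPt (P ∩ reflP z0 P) v :=
    (hqpo z0 hz0).1.unique hbot (bot_min_spec (hqpo z0 hz0).1)
  refine ⟨φ, ?_⟩
  have heve : (fun k => botPt (P ∩ reflP (ys (φ k)) P) v) =ᶠ[atTop]
      (fun k => botPt (P ∩ reflP (ns (φ k)) P) v) := by
    filter_upwards [hφmono.tendsto_atTop.eventually hyseq] with k hk
    rw [hk]
  have := Filter.Tendsto.congr' heve hφtend
  rwa [hbeq] at this

/-- Bot-top diagonal. For a quasi-positively oriented polytope `(P, v)` and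
every `z ∈ P`, the function `φ(x,y) = ⟨x - y, v⟩` attains its minimum on the fiber
`π⁻¹(z) = {(x,y) ∈ P × P : x + y = 2z}` at the unique point
`(bot(P ∩ ρ_z P), top(P ∩ ρ_z P))`; the resulting section `Δ_{(P,v)}` agrees with the
set-theoretic diagonal on the vertices of `P` and is homotopic to it via
`H(z,t) = (1-t)(z,z) + t Δ_{(P,v)}(z)`. -/
theorem stmt0 {n : ℕ} (P : Set (Vec n)) (v : Vec n)
    (hP : IsPolytope P) (hqpo : QuasiPosOriented P v) :
    (∀ z ∈ P,
      IsBotOf (P ∩ reflP z P) v (botPt (P ∩ reflP z P) v) ∧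
      IsTopOf (P ∩ reflP z P) v (topPt (P ∩ reflP z P) v) ∧
      botPt (P ∩ reflP z P) v ∈ P ∧ topPt (P ∩ reflP z P) v ∈ P ∧
      botPt (P ∩ reflP z P) v + topPt (P ∩ reflP z P) v = (2 : ℝ) • z ∧
      (∀ x ∈ P, ∀ y ∈ P, x + y = (2 : ℝ) • z →
        dot (botPt (P ∩ reflP z P) v - topPt (P ∩ reflP z P) v) v ≤ dot (x - y) v ∧
        (dot (x - y) v = dot (botPt (P ∩ reflP z P) v - topPt (P ∩ reflP z P) v) v →
          x = botPt (P ∩ reflP z P) v ∧ y = topPt (P ∩ reflP z P) v))) ∧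
    (∀ z, IsFace P {z} →
      botPt (P ∩ reflP z P) v = z ∧ topPt (P ∩ reflP z P) v = z) ∧
    (∀ p : Vec n × ℝ, p ∈ P ×ˢ Set.Icc (0 : ℝ) 1 →
      ((1 - p.2) • p.1 + p.2 • botPt (P ∩ reflP p.1 P) v,
       (1 - p.2) • p.1 + p.2 • topPt (P ∩ reflP p.1 P) v) ∈ P ×ˢ P) ∧
    ContinuousOn (fun p : Vec n × ℝ =>
        (((1 - p.2) • p.1 + p.2 • botPt (P ∩ reflP p.1 P) v,
          (1 - p.2) • p.1 + p.2 • topPt (P ∩ reflP p.1 P) v) : Vec n × Vec n))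
      (P ×ˢ Set.Icc (0 : ℝ) 1) ∧
    (∀ z ∈ P,
      ((1 - (0 : ℝ)) • z + (0 : ℝ) • botPt (P ∩ reflP z P) v,
       (1 - (0 : ℝ)) • z + (0 : ℝ) • topPt (P ∩ reflP z P) v) = (z, z) ∧
      ((1 - (1 : ℝ)) • z + (1 : ℝ) • botPt (P ∩ reflP z P) v,
       (1 - (1 : ℝ)) • z + (1 : ℝ) • topPt (P ∩ reflP z P) v)
        = (botPt (P ∩ reflP z P) v, topPt (P ∩ reflP z P) v)) := by
  obtain ⟨S, hPS⟩ := hP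
  have hconv : Convex ℝ P := hPS ▸ convex_convexHull ℝ _
  have part1 : ∀ z ∈ P,
      IsBotOf (P ∩ reflP z P) v (botPt (P ∩ reflP z P) v) ∧
      IsTopOf (P ∩ reflP z P) v (topPt (P ∩ reflP z P) v) ∧
      botPt (P ∩ reflP z P) v ∈ P ∧ topPt (P ∩ reflP z P) v ∈ P ∧
      botPt (P ∩ reflP z P) v + topPt (P ∩ reflP z P) v = (2 : ℝ) • z ∧
      (∀ x ∈ P, ∀ y ∈ P, x + y = (2 : ℝ) • z →
        dot (botPt (P ∩ reflP z P) v - topPt (P ∩ reflP z P) v) v ≤ dot (x - y) v ∧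
        (dot (x - y) v = dot (botPt (P ∩ reflP z P) v - topPt (P ∩ reflP z P) v) v →
          x = botPt (P ∩ reflP z P) v ∧ y = topPt (P ∩ reflP z P) v)) := by
    intro z hz
    have h1 := bot_min_spec (hqpo z hz).1
    have h2 := top_max_spec (hqpo z hz).2
    have htop := top_eq_refl_bot hqpo hz
    have hbP : botPt (P ∩ reflP z P) v ∈ P := h1.1.1
    have htP : topPt (P ∩ reflP z P) v ∈ P := h2.1.1
    have hsum : botPt (P ∩ reflP z P) v + topPt (P ∩ reflP z P) v = (2 : ℝ) • z := by
      rw [htop]; module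
    refine ⟨h1, h2, hbP, htP, hsum, ?_⟩
    intro x hx y hy hxy
    have hxQ : x ∈ P ∩ reflP z P := mem_inter_refl_iff.mpr
      ⟨hx, by rw [show (2:ℝ) • z - x = y by rw [← hxy]; abel]; exact hy⟩
    have hyQ : y ∈ P ∩ reflP z P := mem_inter_refl_iff.mpr
      ⟨hy, by rw [show (2:ℝ) • z - y = x by rw [← hxy]; abel]; exact hx⟩
    have hb := h1.2 x hxQ
    have ht := h2.2 y hyQ
    rw [dot_sub_v, dot_sub_v]
    constructor
    · linarith
    · intro heq
      have hx_eq : dot v x = dot v (botPt (P ∩ reflP z P) v) := by linarith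
      have hy_eq : dot v y = dot v (topPt (P ∩ reflP z P) v) := by linarith
      have hxb : IsBotOf (P ∩ reflP z P) v x :=
        ⟨hxQ, fun w hw => by rw [hx_eq]; exact h1.2 w hw⟩
      have hyt : IsTopOf (P ∩ reflP z P) v y :=
        ⟨hyQ, fun w hw => by rw [hy_eq]; exact h2.2 w hw⟩
      exact ⟨(hqpo z hz).1.unique hxb h1, (hqpo z hz).2.unique hyt h2⟩
  refine ⟨part1, ?_, ?_, ?_, ?_⟩
  · -- vertices
    intro z hface
    obtain ⟨c, hc⟩ := hface
    have hzmem : z ∈ {x ∈ P | ∀ y ∈ P, dot c y ≤ dot c x} := by rw [← hc]; rfl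
    obtain ⟨hzP, hzmax⟩ := hzmem
    have hQz : P ∩ reflP z P = {z} := by
      apply Set.eq_singleton_iff_unique_mem.mpr
      constructor
      · exact mem_inter_refl_iff.mpr
          ⟨hzP, by rw [show (2:ℝ) • z - z = z by module]; exact hzP⟩
      · intro x hx
        obtain ⟨hx1, hx2⟩ := mem_inter_refl_iff.mp hx
        have e1 : dot c ((2:ℝ) • z - x) = 2 * dot c z - dot c x := by
          rw [dot_sub_right, dot_smul_right]
        have l1 := hzmax x hx1
        have l2 := hzmax _ hx2
        rw [e1] at l2
        have hdx : dot c x = dot c z := by linarith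
        have hxface : x ∈ {x ∈ P | ∀ y ∈ P, dot c y ≤ dot c x} :=
          ⟨hx1, fun y hy => by rw [hdx]; exact hzmax y hy⟩
        rw [← hc] at hxface
        exact hxface
    have hbotz : IsBotOf (P ∩ reflP z P) v z :=
      ⟨by rw [hQz]; rfl, fun y hy => by rw [hQz] at hy; rw [hy]⟩
    have htopz : IsTopOf (P ∩ reflP z P) v z :=
      ⟨by rw [hQz]; rfl, fun y hy => by rw [hQz] at hy; rw [hy]⟩
    exact ⟨((hqpo z hzP).1.unique (bot_min_spec (hqpo z hzP).1) hbotz),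
      ((hqpo z hzP).2.unique (top_max_spec (hqpo z hzP).2) htopz)⟩
  · -- membership of homotopy
    rintro ⟨z, t⟩ ⟨hz, ht0, ht1⟩
    obtain ⟨_, _, hbP, htP, _, _⟩ := part1 z hz
    constructor
    · exact hconv hz hbP (by linarith) ht0 (by ring)
    · exact hconv hz htP (by linarith) ht0 (by ring)
  · -- continuity
    have hbotcont := cont_bot hPS hqpo
    have g1 : ContinuousOn (fun p : Vec n × ℝ => botPt (P ∩ reflP p.1 P) v)
        (P ×ˢ Set.Icc (0:ℝ) 1) :=
      hbotcont.comp continuous_fst.continuousOn (fun p hp => hp.1)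
    have hc1 : ContinuousOn
        (fun p : Vec n × ℝ => (1 - p.2) • p.1 + p.2 • botPt (P ∩ reflP p.1 P) v)
        (P ×ˢ Set.Icc (0:ℝ) 1) :=
      (((continuous_const.sub continuous_snd).continuousOn).smul
        continuous_fst.continuousOn).add ((continuous_snd.continuousOn).smul g1)
    have hc2 : ContinuousOn
        (fun p : Vec n × ℝ => (1 - p.2) • p.1 +
          p.2 • ((2:ℝ) • p.1 - botPt (P ∩ reflP p.1 P) v))
        (P ×ˢ Set.Icc (0:ℝ) 1) :=
      (((continuous_const.sub continuous_snd).continuousOn).smul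
        continuous_fst.continuousOn).add ((continuous_snd.continuousOn).smul
          (((continuous_fst.const_smul (2:ℝ)).continuousOn).sub g1))
    apply ContinuousOn.congr (hc1.prodMk hc2)
    intro p hp
    have htope := top_eq_refl_bot hqpo hp.1
    simp only [Prod.mk.injEq]
    exact ⟨trivial, by rw [htope]⟩
  · -- endpoints
    intro z hz
    constructor
    · simp
    · simp
end
end

section
/- Let P ⊆ ℝⁿ be a polytope, v ∈ ℝⁿ, and F, G nonempty faces of P. Then (F,G) ∈ F^φ if and only if (N_P(F) + εv) ∩ N_P(G) ≠ ∅ for all ε > 0, if and only if N_P(F) ∩ (N_P(G) − εv) ≠ ∅ for all ε > 0. Moreover, if P is full-dimensional (dim P = n) and the coherent subdivision π(F^φ) is tight, then a pair (F,G) ∈ F^φ satisfies dim F + dim G = dim P if and only if the intersection (N_P(F) + εv) ∩ N_P(G) has dimension zero. -/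
open scoped BigOperators

noncomputable section

open Finset

namespace Stmt2Aux

/-! ### dot product algebra -/

lemma dot_add_right {m : ℕ} (c x y : Vec m) : dot c (x + y) = dot c x + dot c y := by
  simp [dot, mul_add, Finset.sum_add_distrib]

lemma dot_sub_right {m : ℕ} (c x y : Vec m) : dot c (x - y) = dot c x - dot c y := by
  simp [dot, mul_sub, Finset.sum_sub_distrib]

lemma dot_smul_right {m : ℕ} (c : Vec m) (t : ℝ) (x : Vec m) : dot c (t • x) = t * dot c x := by
  simp [dot, Finset.mul_sum]; apply Finset.sum_congr rfl; intros; ring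

lemma dot_comm {m : ℕ} (x y : Vec m) : dot x y = dot y x := by
  simp [dot]; apply Finset.sum_congr rfl; intros; ring

lemma dot_add_left {m : ℕ} (c d x : Vec m) : dot (c + d) x = dot c x + dot d x := by
  rw [dot_comm, dot_add_right, dot_comm x c, dot_comm x d]

lemma dot_sub_left {m : ℕ} (c d x : Vec m) : dot (c - d) x = dot c x - dot d x := by
  rw [dot_comm, dot_sub_right, dot_comm x c, dot_comm x d]

lemma dot_smul_left {m : ℕ} (c : Vec m) (t : ℝ) (x : Vec m) : dot (t • c) x = t * dot c x := by
  rw [dot_comm, dot_smul_right, dot_comm]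

lemma dot_zero_right {m : ℕ} (c : Vec m) : dot c 0 = 0 := by simp [dot]

lemma dot_zero_left {m : ℕ} (c : Vec m) : dot 0 c = 0 := by simp [dot]

lemma dot_sum_right {m : ℕ} {ι : Type*} (c : Vec m) (s : Finset ι) (f : ι → Vec m) :
    dot c (∑ i ∈ s, f i) = ∑ i ∈ s, dot c (f i) := by
  classical
  induction s using Finset.induction with
  | empty => simp [dot_zero_right]
  | insert _ _ h ih => rw [Finset.sum_insert h, Finset.sum_insert h, dot_add_right, ih]

lemma dot_self_eq_zero {m : ℕ} {d : Vec m} (h : dot d d = 0) : d = 0 := by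
  have h2 : ∀ i ∈ Finset.univ, d i * d i = 0 := by
    have h' : ∑ i : Fin m, d i * d i = 0 := h
    rw [Finset.sum_eq_zero_iff_of_nonneg (fun i _ => mul_self_nonneg (d i))] at h'
    exact h'
  funext i
  have := h2 i (Finset.mem_univ i)
  exact mul_self_eq_zero.mp this

/-- the linear map `x ↦ dot c x` -/
def dotL {m : ℕ} (c : Vec m) : Vec m →ₗ[ℝ] ℝ where
  toFun := dot c
  map_add' x y := dot_add_right c x y
  map_smul' t x := by simp [dot_smul_right]

@[simp] lemma dotL_apply {m : ℕ} (c x : Vec m) : dotL c x = dot c x := rfl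

/-- Riesz representation for `dot`. -/
lemma exists_dot_repr {m : ℕ} (ψ : Vec m →ₗ[ℝ] ℝ) : ∃ d : Vec m, ∀ x, dot d x = ψ x := by
  classical
  refine ⟨fun i => ψ (fun j => if i = j then 1 else 0), fun x => ?_⟩
  conv_rhs => rw [pi_eq_sum_univ x, map_sum]
  simp only [map_smul, smul_eq_mul]
  simp [dot, mul_comm]

end Stmt2Aux
namespace Stmt2Aux

/-! ### convex hull helpers -/

lemma mem_hull_iff {m : ℕ} (S : Finset (Vec m)) (x : Vec m) :
    x ∈ convexHull ℝ (S : Set (Vec m)) ↔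
      ∃ w : Vec m → ℝ, (∀ y ∈ S, 0 ≤ w y) ∧ ∑ y ∈ S, w y = 1 ∧ ∑ y ∈ S, w y • y = x := by
  rw [Finset.convexHull_eq]
  constructor
  · rintro ⟨w, h0, h1, hc⟩
    refine ⟨w, h0, h1, ?_⟩
    rw [Finset.centerMass_eq_of_sum_1 S id h1] at hc
    simpa using hc
  · rintro ⟨w, h0, h1, hc⟩
    refine ⟨w, h0, h1, ?_⟩
    rw [Finset.centerMass_eq_of_sum_1 S id h1]
    simpa using hc

lemma dot_le_of_hull {m : ℕ} {S : Finset (Vec m)} {x : Vec m}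
    (hx : x ∈ convexHull ℝ (S : Set (Vec m))) {c : Vec m} {B : ℝ}
    (hB : ∀ s ∈ S, dot c s ≤ B) : dot c x ≤ B := by
  obtain ⟨w, h0, h1, hc⟩ := (mem_hull_iff S x).mp hx
  calc dot c x = ∑ y ∈ S, w y * dot c y := by
        rw [← hc, dot_sum_right]; exact Finset.sum_congr rfl fun y _ => dot_smul_right c (w y) y
    _ ≤ ∑ y ∈ S, w y * B :=
        Finset.sum_le_sum fun y hy => mul_le_mul_of_nonneg_left (hB y hy) (h0 y hy)
    _ = B := by rw [← Finset.sum_mul, h1, one_mul]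

lemma le_dot_of_hull {m : ℕ} {S : Finset (Vec m)} {x : Vec m}
    (hx : x ∈ convexHull ℝ (S : Set (Vec m))) {c : Vec m} {B : ℝ}
    (hB : ∀ s ∈ S, B ≤ dot c s) : B ≤ dot c x := by
  have := dot_le_of_hull (c := -c) (B := -B) hx (fun s hs => by
    have := hB s hs
    simp only [← neg_zero, dot_comm (-c) s, dot_comm c s] at *
    rw [show -c = (-1 : ℝ) • c from by funext i; simp, dot_smul_right]
    linarith)
  rw [dot_comm (-c) x, show -c = (-1 : ℝ) • c from by funext i; simp, dot_smul_right,
    dot_comm x c] at this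
  linarith

/-! ### faces of polytopes -/

section Face

variable {m : ℕ} {S : Finset (Vec m)} {P : Set (Vec m)}

/-- structure of a nonempty face, explicit filter version. -/
lemma face_repr_filter (hS : P = convexHull ℝ (S : Set (Vec m))) {F : Set (Vec m)} (cF : Vec m)
    (hFdef : F = {x ∈ P | ∀ y ∈ P, dot cF y ≤ dot cF x}) (hFne : F.Nonempty) :
    (S.filter (fun p => ∀ s ∈ S, dot cF s ≤ dot cF p)).Nonempty ∧
    ((S.filter (fun p => ∀ s ∈ S, dot cF s ≤ dot cF p) : Finset (Vec m)) : Set (Vec m)) ⊆ F ∧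
      F = convexHull ℝ ((S.filter (fun p => ∀ s ∈ S, dot cF s ≤ dot cF p) : Finset (Vec m)) : Set (Vec m)) := by
  classical
  obtain ⟨x₀, hx₀⟩ := hFne
  have hx₀P : x₀ ∈ P := by rw [hFdef] at hx₀; exact hx₀.1
  have hSne : S.Nonempty := by
    by_contra h
    rw [Finset.not_nonempty_iff_eq_empty] at h
    rw [hS, h] at hx₀P; simp at hx₀P
  set S₀ : Finset (Vec m) := S.filter (fun p => ∀ s ∈ S, dot cF s ≤ dot cF p) with hS₀def
  obtain ⟨p₀, hp₀S, hp₀max⟩ := S.exists_max_image (fun s => dot cF s) hSne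
  have hp₀ : p₀ ∈ S₀ := Finset.mem_filter.mpr ⟨hp₀S, hp₀max⟩
  have hSP : ∀ s ∈ S, s ∈ P := fun s hs => hS ▸ subset_convexHull ℝ _ hs
  -- every element of S₀ is in F
  have hS₀F : (S₀ : Set (Vec m)) ⊆ F := by
    intro p hp
    rw [Finset.mem_coe, hS₀def, Finset.mem_filter] at hp
    rw [hFdef]
    exact ⟨hSP p hp.1, fun y hy => dot_le_of_hull (hS ▸ hy) hp.2⟩
  -- the max value
  have hmaxF : ∀ x ∈ F, dot cF x = dot cF p₀ := by
    intro x hx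
    rw [hFdef] at hx
    have h1 : dot cF x ≤ dot cF p₀ := by
      have := hS₀F (Finset.mem_coe.mpr hp₀)
      rw [hFdef] at this
      exact this.2 x hx.1
    have h2 : dot cF p₀ ≤ dot cF x := hx.2 p₀ (hSP p₀ hp₀S)
    linarith
  refine ⟨⟨p₀, hp₀⟩, hS₀F, ?_⟩
  apply Set.Subset.antisymm
  · -- F ⊆ hull S₀
    intro x hx
    have hxP : x ∈ P := by rw [hFdef] at hx; exact hx.1
    obtain ⟨w, h0, h1, hc⟩ := (mem_hull_iff S x).mp (hS ▸ hxP)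
    have hwz : ∀ s ∈ S, s ∉ S₀ → w s = 0 := by
      intro s hs hns
      by_contra hw
      have hws : 0 < w s := lt_of_le_of_ne (h0 s hs) (Ne.symm hw)
      -- dot cF s < dot cF p₀ since s ∉ S₀
      have hlt : dot cF s < dot cF p₀ := by
        rcases lt_or_eq_of_le (hp₀max s hs) with h | h
        · exact h
        · exfalso; apply hns
          exact Finset.mem_filter.mpr ⟨hs, fun s' hs' => h ▸ hp₀max s' hs'⟩
      have hsum : ∑ y ∈ S, w y * dot cF y = dot cF p₀ := by
        rw [← hmaxF x hx, ← hc, dot_sum_right]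
        exact Finset.sum_congr rfl fun y _ => (dot_smul_right cF (w y) y).symm
      have hle : ∀ y ∈ S, w y * dot cF y ≤ w y * dot cF p₀ :=
        fun y hy => mul_le_mul_of_nonneg_left (hp₀max y hy) (h0 y hy)
      have hstrict : ∑ y ∈ S, w y * dot cF y < ∑ y ∈ S, w y * dot cF p₀ := by
        apply Finset.sum_lt_sum hle ⟨s, hs, mul_lt_mul_of_pos_left hlt hws⟩
      rw [hsum, ← Finset.sum_mul, h1, one_mul] at hstrict
      exact lt_irrefl _ hstrict
    rw [mem_hull_iff]
    refine ⟨w, fun y hy => h0 y (Finset.filter_subset _ _ hy), ?_, ?_⟩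
    · rw [← h1]
      exact Finset.sum_subset (Finset.filter_subset _ _) (fun s hs hns => hwz s hs hns)
    · rw [← hc]
      exact Finset.sum_subset (Finset.filter_subset _ _)
        (fun s hs hns => by rw [hwz s hs hns, zero_smul])
  · -- hull S₀ ⊆ F
    intro x hx
    rw [hFdef]
    constructor
    · rw [hS]
      exact convexHull_mono (Finset.coe_subset.mpr (Finset.filter_subset _ _)) hx
    · intro y hy
      apply le_dot_of_hull hx
      intro p hp
      have := (Finset.mem_filter.mp hp).2
      exact dot_le_of_hull (hS ▸ hy) this

/-- structure of a nonempty face. -/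
lemma face_repr (hS : P = convexHull ℝ (S : Set (Vec m))) {F : Set (Vec m)} (cF : Vec m)
    (hFdef : F = {x ∈ P | ∀ y ∈ P, dot cF y ≤ dot cF x}) (hFne : F.Nonempty) :
    ∃ S₀ : Finset (Vec m), S₀ ⊆ S ∧ S₀.Nonempty ∧ (S₀ : Set (Vec m)) ⊆ F ∧
      F = convexHull ℝ (S₀ : Set (Vec m)) := by
  obtain ⟨h1, h2, h3⟩ := face_repr_filter hS cF hFdef hFne
  exact ⟨_, Finset.filter_subset _ _, h1, h2, h3⟩

/-- normal cone membership via vertices. -/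
lemma normalCone_iff (hS : P = convexHull ℝ (S : Set (Vec m))) {F : Set (Vec m)}
    {S₀ : Finset (Vec m)} (hsub : S₀ ⊆ S) (hS₀F : (S₀ : Set (Vec m)) ⊆ F)
    (hFhull : F = convexHull ℝ (S₀ : Set (Vec m))) (c : Vec m) :
    c ∈ normalCone P F ↔ ∀ p ∈ S₀, ∀ s ∈ S, dot c s ≤ dot c p := by
  constructor
  · intro hc p hp s hs
    have hpF := hS₀F (Finset.mem_coe.mpr hp)
    have := hc hpF
    exact this.2 s (hS ▸ subset_convexHull ℝ _ hs)
  · intro h x hx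
    have hxh : x ∈ convexHull ℝ (S₀ : Set (Vec m)) := hFhull ▸ hx
    constructor
    · rw [hS]
      exact convexHull_mono (by exact_mod_cast hsub) hxh
    · intro y hy
      apply le_dot_of_hull hxh
      intro p hp
      exact dot_le_of_hull (hS ▸ hy) (fun s hs => h p hp s hs)

end Face

end Stmt2Aux
namespace Stmt2Aux

/-! ### finitely generated cones are closed; Farkas -/

section Cone

variable {m : ℕ}

lemma coneOf_finset_iff (T : Finset (Vec m)) (z : Vec m) :
    z ∈ coneOf (T : Set (Vec m)) ↔
      ∃ l : Vec m → ℝ, (∀ s, 0 ≤ l s) ∧ z = ∑ s ∈ T, l s • s := by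
  classical
  constructor
  · rintro ⟨k, x, l, hxT, hl, rfl⟩
    refine ⟨fun s => ∑ i ∈ Finset.univ.filter (fun i => x i = s), l i,
      fun s => Finset.sum_nonneg (fun i _ => hl i), ?_⟩
    rw [← Finset.sum_fiberwise_of_maps_to (g := x) (t := T)
      (fun i _ => Finset.mem_coe.mp (hxT i)) (fun i => l i • x i)]
    apply Finset.sum_congr rfl
    intro s _
    rw [Finset.sum_smul]
    apply Finset.sum_congr rfl
    intro i hi
    rw [(Finset.mem_filter.mp hi).2]
  · rintro ⟨l, hl, rfl⟩
    refine ⟨T.card, fun i => ↑(T.equivFin.symm i), fun i => l ↑(T.equivFin.symm i),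
      fun i => (T.equivFin.symm i).2, fun i => hl _, ?_⟩
    rw [← Finset.sum_coe_sort T (fun s => l s • s)]
    exact (Equiv.sum_comp T.equivFin.symm (fun a => l ↑a • (a : Vec m))).symm

lemma coneOf_mono {X Y : Set (Vec m)} (h : X ⊆ Y) : coneOf X ⊆ coneOf Y := by
  rintro z ⟨k, x, l, hx, hl, rfl⟩
  exact ⟨k, x, l, fun i => h (hx i), hl, rfl⟩

lemma zero_mem_coneOf (X : Set (Vec m)) : (0 : Vec m) ∈ coneOf X := by
  exact ⟨0, Fin.elim0, Fin.elim0, fun i => i.elim0, fun i => i.elim0, by simp⟩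

lemma smul_mem_coneOf {X : Set (Vec m)} {z : Vec m} (hz : z ∈ coneOf X) {t : ℝ} (ht : 0 ≤ t) :
    t • z ∈ coneOf X := by
  obtain ⟨k, x, l, hx, hl, rfl⟩ := hz
  exact ⟨k, x, fun i => t * l i, hx, fun i => mul_nonneg ht (hl i), by
    rw [Finset.smul_sum]; exact Finset.sum_congr rfl fun i _ => (mul_smul t (l i) (x i)).symm⟩

lemma convex_coneOf_finset (T : Finset (Vec m)) : Convex ℝ (coneOf (T : Set (Vec m))) := by
  intro z hz w hw a b ha hb _
  rw [coneOf_finset_iff] at hz hw ⊢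
  obtain ⟨l1, h1, rfl⟩ := hz
  obtain ⟨l2, h2, rfl⟩ := hw
  refine ⟨fun s => a * l1 s + b * l2 s,
    fun s => add_nonneg (mul_nonneg ha (h1 s)) (mul_nonneg hb (h2 s)), ?_⟩
  rw [Finset.smul_sum, Finset.smul_sum, ← Finset.sum_add_distrib]
  apply Finset.sum_congr rfl
  intro s _
  rw [add_smul, mul_smul, mul_smul]

/-- Carathéodory for cones, Finset version. -/
lemma cara (T : Finset (Vec m)) : ∀ (l : Vec m → ℝ), (∀ s ∈ T, 0 ≤ l s) →
    ∃ I : Finset (Vec m), I ⊆ T ∧ LinearIndependent ℝ (fun s : ↥I => (s : Vec m)) ∧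
      ∃ l' : Vec m → ℝ, (∀ s ∈ I, 0 ≤ l' s) ∧ ∑ s ∈ I, l' s • s = ∑ s ∈ T, l s • s := by
  classical
  induction T using Finset.strongInduction with
  | _ T ih =>
    intro l hl
    by_cases hind : LinearIndependent ℝ (fun s : ↥T => (s : Vec m))
    · exact ⟨T, le_refl _, hind, l, hl, rfl⟩
    · obtain ⟨g, hgsum, i₀, hgi₀⟩ := Fintype.not_linearIndependent_iff.mp hind
      set G : Vec m → ℝ := fun s => if h : s ∈ T then g ⟨s, h⟩ else 0 with hGdef
      have hGsum : ∑ s ∈ T, G s • s = 0 := by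
        rw [← Finset.sum_coe_sort T (fun s => G s • s)]
        rw [← hgsum]
        apply Finset.sum_congr rfl
        intro a _
        simp only [hGdef, dif_pos a.2]
      have hGne : ∃ s ∈ T, G s ≠ 0 := ⟨↑i₀, i₀.2, by simp only [hGdef, dif_pos i₀.2]; exact hgi₀⟩
      -- key step, for a relation G with some positive coefficient
      have key : ∀ G' : Vec m → ℝ, (∑ s ∈ T, G' s • s = 0) → (∃ s ∈ T, 0 < G' s) →
          ∃ I : Finset (Vec m), I ⊆ T ∧ LinearIndependent ℝ (fun s : ↥I => (s : Vec m)) ∧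
          ∃ l' : Vec m → ℝ, (∀ s ∈ I, 0 ≤ l' s) ∧ ∑ s ∈ I, l' s • s = ∑ s ∈ T, l s • s := by
        intro G' hG'sum ⟨sp, hspT, hspP⟩
        set T' := T.filter (fun s => 0 < G' s) with hT'def
        have hT'ne : T'.Nonempty := ⟨sp, Finset.mem_filter.mpr ⟨hspT, hspP⟩⟩
        obtain ⟨s₀, hs₀, hs₀min⟩ := T'.exists_min_image (fun s => l s / G' s) hT'ne
        have hs₀T : s₀ ∈ T := (Finset.mem_filter.mp hs₀).1
        have hG's₀ : 0 < G' s₀ := (Finset.mem_filter.mp hs₀).2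
        set t : ℝ := l s₀ / G' s₀ with htdef
        have ht : 0 ≤ t := div_nonneg (hl s₀ hs₀T) (le_of_lt hG's₀)
        set l'' : Vec m → ℝ := fun s => l s - t * G' s with hl''def
        have hl''nn : ∀ s ∈ T, 0 ≤ l'' s := by
          intro s hs
          simp only [hl''def]
          by_cases hp : 0 < G' s
          · have := hs₀min s (Finset.mem_filter.mpr ⟨hs, hp⟩)
            rw [div_le_div_iff₀ hG's₀ hp] at this
            have : l s₀ * G' s ≤ l s * G' s₀ := this
            rw [htdef, div_mul_eq_mul_div, sub_nonneg, div_le_iff₀ hG's₀]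
            linarith
          · push_neg at hp
            have : t * G' s ≤ 0 := mul_nonpos_of_nonneg_of_nonpos ht hp
            have := hl s hs
            linarith
        have hl''s₀ : l'' s₀ = 0 := by
          simp only [hl''def, htdef]
          field_simp
          ring
        have hsum'' : ∑ s ∈ T, l'' s • s = ∑ s ∈ T, l s • s := by
          simp only [hl''def, sub_smul, Finset.sum_sub_distrib]
          have : ∑ s ∈ T, (t * G' s) • s = t • ∑ s ∈ T, G' s • s := by
            rw [Finset.smul_sum]
            exact Finset.sum_congr rfl fun s _ => mul_smul t (G' s) s
          rw [this, hG'sum, smul_zero, sub_zero]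
        obtain ⟨I, hIsub, hIind, l3, hl3, hl3sum⟩ :=
          ih (T.erase s₀) (Finset.erase_ssubset hs₀T) l'' (fun s hs => hl''nn s (Finset.mem_of_mem_erase hs))
        refine ⟨I, le_trans hIsub (Finset.erase_subset _ _), hIind, l3, hl3, ?_⟩
        rw [hl3sum, Finset.sum_erase T (by rw [hl''s₀, zero_smul]), hsum'']
      by_cases hpos : ∃ s ∈ T, 0 < G s
      · exact key G hGsum hpos
      · apply key (fun s => -G s)
        · rw [← neg_zero, ← hGsum, ← Finset.sum_neg_distrib]
          exact Finset.sum_congr rfl fun s _ => (neg_smul (G s) s)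
        · push_neg at hpos
          obtain ⟨s, hsT, hsne⟩ := hGne
          exact ⟨s, hsT, by have := hpos s hsT; rcases lt_or_eq_of_le this with h | h
                            · linarith
                            · exact absurd h hsne⟩

/-- cone of linearly independent vectors is closed -/
lemma isClosed_coneOf_indep (I : Finset (Vec m))
    (hind : LinearIndependent ℝ (fun s : ↥I => (s : Vec m))) :
    IsClosed (coneOf (I : Set (Vec m))) := by
  classical
  set φ : (↥I → ℝ) →ₗ[ℝ] Vec m :=
    { toFun := fun l => ∑ i : ↥I, l i • (i : Vec m)
      map_add' := by intro a b; simp [add_smul, Finset.sum_add_distrib]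
      map_smul' := by intro t a; simp [Finset.smul_sum, mul_smul] } with hφdef
  have hker : LinearMap.ker φ = ⊥ := by
    rw [LinearMap.ker_eq_bot']
    intro l hlz
    exact funext (Fintype.linearIndependent_iff.mp hind l hlz)
  have hemb := LinearMap.isClosedEmbedding_of_injective hker
  have himg : coneOf (I : Set (Vec m)) = φ '' {l : ↥I → ℝ | ∀ i, 0 ≤ l i} := by
    ext z
    rw [coneOf_finset_iff]
    constructor
    · rintro ⟨l, hl, rfl⟩
      refine ⟨fun i => l ↑i, fun i => hl _, ?_⟩
      simp only [hφdef, LinearMap.coe_mk, AddHom.coe_mk]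
      exact Finset.sum_coe_sort I (fun s => l s • s)
    · rintro ⟨l, hl, rfl⟩
      refine ⟨fun s => if h : s ∈ I then l ⟨s, h⟩ else 0, ?_, ?_⟩
      · intro s
        by_cases h : s ∈ I
        · simpa [dif_pos h] using hl ⟨s, h⟩
        · simp [dif_neg h]
      · simp only [hφdef, LinearMap.coe_mk, AddHom.coe_mk]
        rw [← Finset.sum_coe_sort I (fun s => (if h : s ∈ I then l ⟨s, h⟩ else 0) • s)]
        apply Finset.sum_congr rfl
        intro a _
        rw [dif_pos a.2]
  rw [himg]
  apply hemb.isClosedMap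
  have : {l : ↥I → ℝ | ∀ i, 0 ≤ l i} = ⋂ i : ↥I, {l : ↥I → ℝ | 0 ≤ l i} := by
    ext l; simp [Set.mem_iInter]
  rw [this]
  exact isClosed_iInter fun i => isClosed_le continuous_const (continuous_apply i)

lemma isClosed_coneOf (T : Finset (Vec m)) : IsClosed (coneOf (T : Set (Vec m))) := by
  classical
  have hdecomp : coneOf (T : Set (Vec m)) =
      ⋃ I ∈ {I : Finset (Vec m) | I ⊆ T ∧ LinearIndependent ℝ (fun s : ↥I => (s : Vec m))},
        coneOf (I : Set (Vec m)) := by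
    apply Set.Subset.antisymm
    · intro z hz
      obtain ⟨l, hl, rfl⟩ := (coneOf_finset_iff T z).mp hz
      obtain ⟨I, hIT, hind, l', hl', hsum⟩ := cara T l (fun s _ => hl s)
      refine Set.mem_biUnion (Set.mem_setOf.mpr ⟨hIT, hind⟩) ?_
      rw [coneOf_finset_iff]
      refine ⟨fun s => if s ∈ I then l' s else 0, ?_, ?_⟩
      · intro s
        by_cases h : s ∈ I
        · simpa [if_pos h] using hl' s h
        · simp [if_neg h]
      · rw [← hsum]
        exact (Finset.sum_congr rfl fun s hs => by simp only [if_pos hs]).symm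
    · apply Set.iUnion₂_subset
      intro I hI
      exact coneOf_mono (Finset.coe_subset.mpr hI.1)
  rw [hdecomp]
  apply Set.Finite.isClosed_biUnion
  · apply Set.Finite.subset (T.powerset : Finset (Finset (Vec m))).finite_toSet
    intro I hI
    simpa [Finset.mem_powerset] using hI.1
  · intro I hI
    exact isClosed_coneOf_indep I hI.2

/-- Farkas-type separation. -/
lemma farkas (T : Finset (Vec m)) (e : Vec m) (he : e ∉ coneOf (T : Set (Vec m))) :
    ∃ u : Vec m, (∀ t ∈ T, dot u t ≤ 0) ∧ 0 < dot u e := by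
  obtain ⟨f, w, hfw, hwe⟩ := geometric_hahn_banach_closed_point
    (convex_coneOf_finset T) (isClosed_coneOf T) he
  have h0 : (0:ℝ) < w := by simpa using hfw 0 (zero_mem_coneOf _)
  have hfle : ∀ t ∈ T, f t ≤ 0 := by
    intro t ht
    by_contra hpos
    push_neg at hpos
    have hmem : ((w / f t + 1) • t) ∈ coneOf (T : Set (Vec m)) := by
      apply smul_mem_coneOf
      · exact ⟨1, fun _ => t, fun _ => 1, fun _ => Finset.mem_coe.mpr ht, fun _ => zero_le_one,
          by simp⟩
      · positivity
    have := hfw _ hmem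
    rw [map_smul, smul_eq_mul] at this
    have hw' : (w / f t + 1) * f t = w + f t := by field_simp
    rw [hw'] at this
    linarith
  obtain ⟨u, hu⟩ := exists_dot_repr (f : Vec m →ₗ[ℝ] ℝ)
  refine ⟨u, fun t ht => by rw [hu]; exact hfle t ht, by rw [hu]; exact lt_trans h0 hwe⟩

end Cone

end Stmt2Aux
namespace Stmt2Aux

/-! ### snoc helpers -/

lemma dot_snoc {m : ℕ} (u : Vec (m + 1)) (a : Vec m) (β : ℝ) :
    dot u (Fin.snoc a β) = dot (fun i => u (Fin.castSucc i)) a + u (Fin.last m) * β := by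
  simp only [dot]
  rw [Fin.sum_univ_castSucc]
  simp [Fin.snoc_castSucc, Fin.snoc_last]

lemma snoc_eq_iff' {m : ℕ} {a a' : Vec m} {β β' : ℝ}
    (h : (Fin.snoc a β : Vec (m + 1)) = Fin.snoc a' β') : a = a' ∧ β = β' := by
  constructor
  · funext j
    have := congrFun h (Fin.castSucc j)
    simpa [Fin.snoc_castSucc] using this
  · have := congrFun h (Fin.last m)
    simpa [Fin.snoc_last] using this

/-! ### sufficiency of a single witness -/

lemma inFphi_of_witness {n : ℕ} {P F G : Set (Vec n)} {v f : Vec n} {ε : ℝ} (hε : 0 < ε)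
    (hf : f ∈ normalCone P F) (hg : f + ε • v ∈ normalCone P G) : InFphi P v F G := by
  rintro ⟨x, hx, y, hy, lam, hlam, hmem⟩
  obtain ⟨x', hx', y', hy', heq⟩ := hmem
  obtain ⟨e1, e2⟩ := snoc_eq_iff' heq
  have exy : x + y = x' + y' :=
    smul_right_injective (Vec n) (by norm_num : (1/2 : ℝ) ≠ 0) e1
  have h1 : dot f x' ≤ dot f x := (hf hx).2 x' hx'
  have h2 : dot (f + ε • v) y' ≤ dot (f + ε • v) y := (hg hy).2 y' hy'
  rw [dot_add_left, dot_add_left, dot_smul_left, dot_smul_left] at h2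
  have h3 : dot f x + dot f y = dot f x' + dot f y' := by
    rw [← dot_add_right, ← dot_add_right, exy]
  have hvy : ε * dot v y' ≤ ε * dot v y := by linarith
  have hvy' : dot v y' ≤ dot v y := le_of_mul_le_mul_left hvy hε
  rw [dot_sub_left, dot_sub_left] at e2
  have h4 : dot x v + dot y v = dot x' v + dot y' v := by
    rw [← dot_add_left, ← dot_add_left, exy]
  rw [dot_comm v y', dot_comm v y] at hvy'
  linarith

end Stmt2Aux
namespace Stmt2Aux

section Main

variable {n : ℕ}

/-- The main existence result: from `InFphi` we get a common normal vector pair. -/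
lemma exists_normal_pair {S : Finset (Vec n)} {P F G : Set (Vec n)} (v : Vec n)
    (hS : P = convexHull ℝ (S : Set (Vec n)))
    {SF SG : Finset (Vec n)} (hSFsub : SF ⊆ S) (hSFF : (SF : Set (Vec n)) ⊆ F)
    (hFhull : F = convexHull ℝ (SF : Set (Vec n)))
    (hSGsub : SG ⊆ S) (hSGG : (SG : Set (Vec n)) ⊆ G)
    (hGhull : G = convexHull ℝ (SG : Set (Vec n)))
    {ε : ℝ} (hε : 0 < ε) (hIn : InFphi P v F G) :
    ∃ f : Vec n, f ∈ normalCone P F ∧ f + ε • v ∈ normalCone P G := by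
  classical
  have hPconv : Convex ℝ P := hS ▸ convex_convexHull ℝ _
  have hSP : ∀ s ∈ S, s ∈ P := fun s hs => hS ▸ subset_convexHull ℝ _ hs
  set TF : Finset (Vec (n+1)) :=
    (SF ×ˢ S).image (fun pr => Fin.snoc (pr.2 - pr.1) 0) with hTFdef
  set TG : Finset (Vec (n+1)) :=
    (SG ×ˢ S).image (fun pr => Fin.snoc (pr.2 - pr.1) (dot v (pr.2 - pr.1))) with hTGdef
  set T : Finset (Vec (n+1)) := TF ∪ TG with hTdef
  set e : Vec (n+1) := Fin.snoc (0 : Vec n) 1 with hedef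
  have he : e ∉ coneOf (T : Set (Vec (n+1))) := by
    intro he
    obtain ⟨k, xv, l, hxT, hl, hesum⟩ := he
    have hchoice : ∀ i : Fin k, ∃ p : Vec n, ∃ s : Vec n, ∃ b : Bool,
        (b = false → p ∈ SF) ∧ (b = true → p ∈ SG) ∧ s ∈ S ∧
        xv i = Fin.snoc (s - p) (if b = true then dot v (s - p) else 0) := by
      intro i
      have := hxT i
      rw [Finset.mem_coe, hTdef, Finset.mem_union] at this
      rcases this with h | h
      · obtain ⟨pr, hpr, heq⟩ := Finset.mem_image.mp h
        obtain ⟨h1, h2⟩ := Finset.mem_product.mp hpr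
        exact ⟨pr.1, pr.2, false, fun _ => h1, fun h => by simp at h, h2, by
          rw [← heq]; simp⟩
      · obtain ⟨pr, hpr, heq⟩ := Finset.mem_image.mp h
        obtain ⟨h1, h2⟩ := Finset.mem_product.mp hpr
        exact ⟨pr.1, pr.2, true, fun h => by simp at h, fun _ => h1, h2, by
          rw [← heq]; simp⟩
    choose p s b hbF hbG hsS hxv using hchoice
    set IG := Finset.univ.filter (fun i : Fin k => b i = true) with hIGdef
    set IF := Finset.univ.filter (fun i : Fin k => ¬ b i = true) with hIFdef
    have hα : ∑ i : Fin k, l i • (s i - p i) = 0 := by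
      funext j
      have h0 := congrFun hesum (Fin.castSucc j)
      rw [hedef, Fin.snoc_castSucc] at h0
      have h1 : (∑ i : Fin k, l i • xv i) (Fin.castSucc j)
          = ∑ i : Fin k, l i * ((s i - p i) j) := by
        rw [Finset.sum_apply]
        apply Finset.sum_congr rfl
        intro i _
        rw [Pi.smul_apply, hxv i, Fin.snoc_castSucc]
        rfl
      rw [h1] at h0
      rw [Finset.sum_apply]
      simp only [Pi.smul_apply, smul_eq_mul]
      rw [← h0]
    have hβ : ∑ i ∈ IG, l i * dot v (s i - p i) = 1 := by
      have h0 := congrFun hesum (Fin.last n)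
      rw [hedef, Fin.snoc_last] at h0
      have h1 : (∑ i : Fin k, l i • xv i) (Fin.last n)
          = ∑ i : Fin k, l i * (if b i = true then dot v (s i - p i) else 0) := by
        rw [Finset.sum_apply]
        apply Finset.sum_congr rfl
        intro i _
        rw [Pi.smul_apply, hxv i, Fin.snoc_last]
        rfl
      rw [h1] at h0
      rw [hIGdef, Finset.sum_filter, h0]
      apply Finset.sum_congr rfl
      intro i _
      by_cases h : b i = true <;> simp [h]
    set A := ∑ i ∈ IF, l i with hAdef
    set B := ∑ i ∈ IG, l i with hBdef
    have hsplit : (∑ i ∈ IG, l i • (s i - p i)) + (∑ i ∈ IF, l i • (s i - p i)) = 0 := by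
      rw [hIGdef, hIFdef, Finset.sum_filter_add_sum_filter_not]
      exact hα
    have hBpos : 0 < B := by
      rcases lt_or_eq_of_le (Finset.sum_nonneg (fun i _ => hl i) : (0:ℝ) ≤ B) with h | h
      · exact h
      · exfalso
        have hz : ∀ i ∈ IG, l i = 0 := by
          intro i hi
          exact (Finset.sum_eq_zero_iff_of_nonneg (fun i _ => hl i)).mp h.symm i hi
        have : ∑ i ∈ IG, l i * dot v (s i - p i) = 0 :=
          Finset.sum_eq_zero fun i hi => by rw [hz i hi, zero_mul]
        rw [hβ] at this; exact one_ne_zero this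
    have hApos : 0 < A := by
      rcases lt_or_eq_of_le (Finset.sum_nonneg (fun i _ => hl i) : (0:ℝ) ≤ A) with h | h
      · exact h
      · exfalso
        have hz : ∀ i ∈ IF, l i = 0 := by
          intro i hi
          exact (Finset.sum_eq_zero_iff_of_nonneg (fun i _ => hl i)).mp h.symm i hi
        have hzF : ∑ i ∈ IF, l i • (s i - p i) = 0 :=
          Finset.sum_eq_zero fun i hi => by rw [hz i hi, zero_smul]
        rw [hzF, add_zero] at hsplit
        have : dot v (∑ i ∈ IG, l i • (s i - p i)) = 0 := by rw [hsplit, dot_zero_right]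
        rw [dot_sum_right] at this
        have h2 : ∑ i ∈ IG, l i * dot v (s i - p i) = 0 := by
          rw [← this]
          exact Finset.sum_congr rfl fun i _ => (dot_smul_right v (l i) _).symm
        rw [hβ] at h2; exact one_ne_zero h2
    set x := ∑ i ∈ IF, (l i / A) • p i with hxdef
    set x' := ∑ i ∈ IF, (l i / A) • s i with hx'def
    set y := ∑ i ∈ IG, (l i / B) • p i with hydef
    set y' := ∑ i ∈ IG, (l i / B) • s i with hy'def
    have hsumIF : ∑ i ∈ IF, l i / A = 1 := by
      rw [← Finset.sum_div, ← hAdef, div_self hApos.ne']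
    have hsumIG : ∑ i ∈ IG, l i / B = 1 := by
      rw [← Finset.sum_div, ← hBdef, div_self hBpos.ne']
    have hxF : x ∈ F := by
      apply Convex.sum_mem (show Convex ℝ F by rw [hFhull]; exact convex_convexHull ℝ _)
        (fun i _ => div_nonneg (hl i) hApos.le) hsumIF
      intro i hi
      have hb : b i = false := by
        have := (Finset.mem_filter.mp hi).2
        simpa using this
      exact hSFF (Finset.mem_coe.mpr (hbF i hb))
    have hyG : y ∈ G := by
      apply Convex.sum_mem (show Convex ℝ G by rw [hGhull]; exact convex_convexHull ℝ _)
        (fun i _ => div_nonneg (hl i) hBpos.le) hsumIG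
      intro i hi
      exact hSGG (Finset.mem_coe.mpr (hbG i (Finset.mem_filter.mp hi).2))
    have hx'P : x' ∈ P :=
      Convex.sum_mem hPconv (fun i _ => div_nonneg (hl i) hApos.le) hsumIF
        (fun i _ => hSP _ (hsS i))
    have hy'P : y' ∈ P :=
      Convex.sum_mem hPconv (fun i _ => div_nonneg (hl i) hBpos.le) hsumIG
        (fun i _ => hSP _ (hsS i))
    have hxsub : x' - x = ∑ i ∈ IF, (l i / A) • (s i - p i) := by
      rw [hx'def, hxdef, ← Finset.sum_sub_distrib]
      exact Finset.sum_congr rfl fun i _ => (smul_sub _ _ _).symm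
    have hysub : y' - y = ∑ i ∈ IG, (l i / B) • (s i - p i) := by
      rw [hy'def, hydef, ← Finset.sum_sub_distrib]
      exact Finset.sum_congr rfl fun i _ => (smul_sub _ _ _).symm
    have hAx : A • (x' - x) = ∑ i ∈ IF, l i • (s i - p i) := by
      rw [hxsub, Finset.smul_sum]
      apply Finset.sum_congr rfl
      intro i _
      rw [smul_smul, ← mul_div_assoc, mul_div_cancel_left₀ _ hApos.ne']
    have hBy : B • (y' - y) = ∑ i ∈ IG, l i • (s i - p i) := by
      rw [hysub, Finset.smul_sum]
      apply Finset.sum_congr rfl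
      intro i _
      rw [smul_smul, ← mul_div_assoc, mul_div_cancel_left₀ _ hBpos.ne']
    have hrel : A • (x' - x) + B • (y' - y) = 0 := by
      rw [hAx, hBy, add_comm]; exact hsplit
    have hdoty : dot v (y' - y) = 1 / B := by
      rw [hysub, dot_sum_right]
      have : ∑ i ∈ IG, dot v ((l i / B) • (s i - p i))
          = ∑ i ∈ IG, (l i * dot v (s i - p i)) / B := by
        apply Finset.sum_congr rfl
        intro i _
        rw [dot_smul_right, div_mul_eq_mul_div]
      rw [this, ← Finset.sum_div, hβ]
    have hdotx : dot v (x' - x) = -(1 / A) := by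
      have h0 : dot v (A • (x' - x) + B • (y' - y)) = 0 := by rw [hrel, dot_zero_right]
      rw [dot_add_right, dot_smul_right, dot_smul_right, hdoty] at h0
      have : A * dot v (x' - x) = -1 := by field_simp at h0 ⊢; linarith
      field_simp
      linarith
    set τ : ℝ := min 1 (A / B) with hτdef
    have hτpos : 0 < τ := lt_min one_pos (div_pos hApos hBpos)
    have hτ1 : τ ≤ 1 := min_le_left _ _
    set σ : ℝ := τ * B / A with hσdef
    have hσpos : 0 < σ := div_pos (mul_pos hτpos hBpos) hApos
    have hσ1 : σ ≤ 1 := by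
      rw [hσdef, div_le_one hApos]
      have : τ ≤ A / B := min_le_right _ _
      rw [le_div_iff₀ hBpos] at this
      linarith
    set x'' := x + τ • (x' - x) with hx''def
    set y'' := y + σ • (y' - y) with hy''def
    have hx''P : x'' ∈ P := by
      have : x'' = (1 - τ) • x + τ • x' := by
        rw [hx''def, smul_sub]
        module
      rw [this]
      have hxP : x ∈ P := by
        rw [hS]; exact convexHull_mono (Finset.coe_subset.mpr hSFsub) (hFhull ▸ hxF)
      exact hPconv hxP hx'P (by linarith) hτpos.le (by ring)
    have hy''P : y'' ∈ P := by
      have : y'' = (1 - σ) • y + σ • y' := by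
        rw [hy''def, smul_sub]
        module
      rw [this]
      exact hPconv (by rw [hS]; exact convexHull_mono (Finset.coe_subset.mpr hSGsub) (hGhull ▸ hyG))
        hy'P (by linarith) hσpos.le (by ring)
    have hzero : τ • (x' - x) + σ • (y' - y) = 0 := by
      have h1 : τ • (x' - x) = (τ / A) • (A • (x' - x)) := by
        rw [smul_smul, div_mul_cancel₀ _ hApos.ne']
      have h2 : σ • (y' - y) = (τ / A) • (B • (y' - y)) := by
        rw [smul_smul]
        congr 1
        rw [hσdef]
        field_simp
      rw [h1, h2, ← smul_add, hrel, smul_zero]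
    have hxyeq : x + y = x'' + y'' := by
      rw [hx''def, hy''def]
      have : x + τ • (x' - x) + (y + σ • (y' - y))
          = x + y + (τ • (x' - x) + σ • (y' - y)) := by module
      rw [this, hzero, add_zero]
    have hdot'' : dot (x'' - y'') v = dot (x - y) v - 2 * τ / A := by
      rw [dot_comm, dot_comm (x - y) v]
      have hexp : x'' - y'' = (x - y) + τ • (x' - x) - σ • (y' - y) := by
        rw [hx''def, hy''def]; module
      rw [hexp, dot_sub_right, dot_add_right, dot_smul_right, dot_smul_right, hdotx, hdoty]
      have hσB : σ * (1 / B) = τ / A := by rw [hσdef]; field_simp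
      rw [hσB]
      ring
    apply hIn
    refine ⟨x, hxF, y, hyG, 2 * τ / A, by positivity, x'', hx''P, y'', hy''P, ?_⟩
    have h1 : (1/2 : ℝ) • (x + y) = (1/2 : ℝ) • (x'' + y'') := by rw [hxyeq]
    have h2 : dot (x - y) v - 2 * τ / A = dot (x'' - y'') v := by rw [hdot'']
    rw [h1, h2]
  -- separation case
  obtain ⟨u, huT, hue⟩ := farkas T e he
  set γ : ℝ := u (Fin.last n) with hγdef
  set c₁ : Vec n := fun i => u (Fin.castSucc i) with hc₁def
  have hγpos : 0 < γ := by
    have := hue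
    rw [hedef, dot_snoc, dot_zero_right, zero_add, mul_one] at this
    exact this
  have hFcons : ∀ p ∈ SF, ∀ s ∈ S, dot c₁ (s - p) ≤ 0 := by
    intro p hp s hs
    have hmem : (Fin.snoc (s - p) 0 : Vec (n+1)) ∈ T := by
      rw [hTdef, Finset.mem_union]
      exact Or.inl (Finset.mem_image.mpr ⟨(p, s), Finset.mem_product.mpr ⟨hp, hs⟩, rfl⟩)
    have := huT _ hmem
    rw [dot_snoc, mul_zero, add_zero] at this
    exact this
  have hGcons : ∀ q ∈ SG, ∀ s ∈ S, dot c₁ (s - q) + γ * dot v (s - q) ≤ 0 := by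
    intro q hq s hs
    have hmem : (Fin.snoc (s - q) (dot v (s - q)) : Vec (n+1)) ∈ T := by
      rw [hTdef, Finset.mem_union]
      exact Or.inr (Finset.mem_image.mpr ⟨(q, s), Finset.mem_product.mpr ⟨hq, hs⟩, rfl⟩)
    have := huT _ hmem
    rw [dot_snoc] at this
    exact this
  refine ⟨(ε / γ) • c₁, ?_, ?_⟩
  · rw [normalCone_iff hS hSFsub hSFF hFhull]
    intro pp hpp ss hss
    have := hFcons pp hpp ss hss
    have h2 : dot ((ε / γ) • c₁) (ss - pp) ≤ 0 := by
      rw [dot_smul_left]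
      have hεγ : 0 ≤ ε / γ := le_of_lt (div_pos hε hγpos)
      exact mul_nonpos_of_nonneg_of_nonpos hεγ this
    rw [dot_sub_right] at h2
    linarith
  · rw [normalCone_iff hS hSGsub hSGG hGhull]
    intro qq hqq ss hss
    have := hGcons qq hqq ss hss
    have h2 : dot ((ε / γ) • c₁ + ε • v) (ss - qq) ≤ 0 := by
      rw [dot_add_left, dot_smul_left, dot_smul_left]
      have key : ε / γ * dot c₁ (ss - qq) + ε * dot v (ss - qq)
          = (ε / γ) * (dot c₁ (ss - qq) + γ * dot v (ss - qq)) := by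
        field_simp
      rw [key]
      exact mul_nonpos_of_nonneg_of_nonpos (le_of_lt (div_pos hε hγpos)) this
    rw [dot_sub_right] at h2
    linarith

end Main

end Stmt2Aux
namespace Stmt2Aux

section Part3

variable {n : ℕ}

lemma sdim_eq (A : Set (Vec n)) : sdim A = Module.finrank ℝ (vectorSpan ℝ A) := by
  rw [sdim, direction_affineSpan]

lemma vectorSpan_avgSet {F G : Set (Vec n)} (hFne : F.Nonempty) (hGne : G.Nonempty) :
    vectorSpan ℝ (avgSet F G) = vectorSpan ℝ F ⊔ vectorSpan ℝ G := by
  apply le_antisymm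
  · rw [vectorSpan_def, Submodule.span_le]
    rintro w hw
    rw [Set.mem_vsub] at hw
    obtain ⟨z, hz, z', hz', rfl⟩ := hw
    obtain ⟨x, hx, y, hy, rfl⟩ := hz
    obtain ⟨x', hx', y', hy', rfl⟩ := hz'
    rw [vsub_eq_sub]
    have heq : (1/2 : ℝ) • (x + y) - (1/2 : ℝ) • (x' + y')
        = (1/2 : ℝ) • (x - x') + (1/2 : ℝ) • (y - y') := by module
    rw [heq]
    apply Submodule.add_mem
    · apply Submodule.smul_mem
      exact Submodule.mem_sup_left (by simpa [vsub_eq_sub] using vsub_mem_vectorSpan ℝ hx hx')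
    · apply Submodule.smul_mem
      exact Submodule.mem_sup_right (by simpa [vsub_eq_sub] using vsub_mem_vectorSpan ℝ hy hy')
  · apply sup_le
    · rw [vectorSpan_def, Submodule.span_le]
      rintro w hw
      rw [Set.mem_vsub] at hw
      obtain ⟨x, hx, x', hx', rfl⟩ := hw
      obtain ⟨y₀, hy₀⟩ := hGne
      have h1 : ((1/2 : ℝ) • (x + y₀) : Vec n) ∈ avgSet F G := ⟨x, hx, y₀, hy₀, rfl⟩
      have h2 : ((1/2 : ℝ) • (x' + y₀) : Vec n) ∈ avgSet F G := ⟨x', hx', y₀, hy₀, rfl⟩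
      have hmem := vsub_mem_vectorSpan ℝ h1 h2
      rw [vsub_eq_sub] at hmem
      have heq : x -ᵥ x' = (2 : ℝ) • ((1/2 : ℝ) • (x + y₀) - (1/2 : ℝ) • (x' + y₀)) := by
        rw [vsub_eq_sub]; module
      rw [heq]
      exact Submodule.smul_mem _ _ hmem
    · rw [vectorSpan_def, Submodule.span_le]
      rintro w hw
      rw [Set.mem_vsub] at hw
      obtain ⟨y, hy, y', hy', rfl⟩ := hw
      obtain ⟨x₀, hx₀⟩ := hFne
      have h1 : ((1/2 : ℝ) • (x₀ + y) : Vec n) ∈ avgSet F G := ⟨x₀, hx₀, y, hy, rfl⟩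
      have h2 : ((1/2 : ℝ) • (x₀ + y') : Vec n) ∈ avgSet F G := ⟨x₀, hx₀, y', hy', rfl⟩
      have hmem := vsub_mem_vectorSpan ℝ h1 h2
      rw [vsub_eq_sub] at hmem
      have heq : y -ᵥ y' = (2 : ℝ) • ((1/2 : ℝ) • (x₀ + y) - (1/2 : ℝ) • (x₀ + y')) := by
        rw [vsub_eq_sub]; module
      rw [heq]
      exact Submodule.smul_mem _ _ hmem

/-- dual vector agreeing with `c₀` on `U` and vanishing on `W`. -/
lemma exists_perp_dual (U W : Submodule ℝ (Vec n)) (hUW : U ⊓ W = ⊥) (c₀ : Vec n) :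
    ∃ d : Vec n, (∀ u ∈ U, dot d u = dot c₀ u) ∧ (∀ w ∈ W, dot d w = 0) := by
  obtain ⟨D, hD⟩ := Submodule.exists_isCompl (U ⊔ W)
  set C := U ⊔ D with hCdef
  have hdisj : Disjoint W C := by
    rw [Submodule.disjoint_def]
    intro x hxW hxC
    obtain ⟨u, hu, d', hd', rfl⟩ := Submodule.mem_sup.mp hxC
    have hd'mem : d' ∈ (U ⊔ W) ⊓ D := by
      constructor
      · have h1 : u + d' - u ∈ U ⊔ W := by
          apply Submodule.sub_mem
          · exact Submodule.mem_sup_right hxW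
          · exact Submodule.mem_sup_left hu
        simpa using h1
      · exact hd'
    rw [disjoint_iff.mp hD.disjoint] at hd'mem
    have hd'0 : d' = 0 := hd'mem
    subst hd'0
    rw [add_zero] at hxW ⊢
    have : u ∈ U ⊓ W := ⟨hu, hxW⟩
    rw [hUW] at this
    exact this
  have hcodis : Codisjoint W C := by
    rw [codisjoint_iff]
    have := codisjoint_iff.mp hD.codisjoint
    rw [hCdef, ← sup_assoc, sup_comm W U]
    exact this
  have hcompl : IsCompl W C := ⟨hdisj, hcodis⟩
  set π := C.subtype.comp (Submodule.projectionOnto C W hcompl.symm) with hπdef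
  obtain ⟨d, hd⟩ := exists_dot_repr ((dotL c₀).comp π)
  refine ⟨d, ?_, ?_⟩
  · intro u hu
    rw [hd]
    have huC : u ∈ C := Submodule.mem_sup_left hu
    simp only [hπdef, LinearMap.comp_apply, Submodule.coe_subtype]
    rw [show u = ((⟨u, huC⟩ : C) : Vec n) from rfl, Submodule.projectionOnto_apply_left]
    rfl
  · intro w hw
    rw [hd]
    simp only [hπdef, LinearMap.comp_apply, Submodule.coe_subtype]
    rw [show w = ((⟨w, hw⟩ : W) : Vec n) from rfl, Submodule.projectionOnto_apply_right]
    simp [dot_zero_right]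

lemma exists_dot_perp_ne (T : Submodule ℝ (Vec n)) (hT : T ≠ ⊤) :
    ∃ d : Vec n, d ≠ 0 ∧ ∀ w ∈ T, dot d w = 0 := by
  obtain ⟨D, hD⟩ := Submodule.exists_isCompl T
  have hDne : D ≠ ⊥ := by
    intro h
    apply hT
    have := codisjoint_iff.mp hD.codisjoint
    rw [h, sup_bot_eq] at this
    exact this
  obtain ⟨z, hzD, hz0⟩ := Submodule.exists_mem_ne_zero_of_ne_bot hDne
  have hdisj : D ⊓ T = ⊥ := by
    rw [inf_comm]
    exact disjoint_iff.mp hD.disjoint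
  obtain ⟨d, hdU, hdW⟩ := exists_perp_dual D T hdisj z
  refine ⟨d, ?_, hdW⟩
  intro hd0
  apply hz0
  apply dot_self_eq_zero
  have := hdU z hzD
  rw [hd0] at this
  rw [← this, dot_zero_left]

end Part3

end Stmt2Aux
namespace Stmt2Aux

section Perturb

variable {n : ℕ}

/-- Perturbation: if `d` respects all tight constraints, then `f, c` can be moved by a small
positive multiple of `d` while staying in the normal cones. -/
lemma perturb {S : Finset (Vec n)} {P F G : Set (Vec n)}
    (hS : P = convexHull ℝ (S : Set (Vec n)))
    {SF SG : Finset (Vec n)} (hSFsub : SF ⊆ S) (hSFF : (SF : Set (Vec n)) ⊆ F)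
    (hFhull : F = convexHull ℝ (SF : Set (Vec n)))
    (hSGsub : SG ⊆ S) (hSGG : (SG : Set (Vec n)) ⊆ G)
    (hGhull : G = convexHull ℝ (SG : Set (Vec n)))
    {f c : Vec n} (hfF : f ∈ normalCone P F) (hcG : c ∈ normalCone P G)
    (d : Vec n)
    (hdF : ∀ p ∈ SF, ∀ s ∈ S.filter (fun s => ∀ s' ∈ S, dot f s' ≤ dot f s),
      dot d (s - p) ≤ 0)
    (hdG : ∀ q ∈ SG, ∀ s ∈ S.filter (fun s => ∀ s' ∈ S, dot c s' ≤ dot c s),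
      dot d (s - q) ≤ 0) :
    ∃ δ : ℝ, 0 < δ ∧ f + δ • d ∈ normalCone P F ∧ c + δ • d ∈ normalCone P G := by
  classical
  set S1 := S.filter (fun s => ∀ s' ∈ S, dot f s' ≤ dot f s) with hS1def
  set S2 := S.filter (fun s => ∀ s' ∈ S, dot c s' ≤ dot c s) with hS2def
  have hSP : ∀ s ∈ S, s ∈ P := fun s hs => hS ▸ subset_convexHull ℝ _ hs
  -- p ∈ SF maximizes f over S
  have hpmaxF : ∀ p ∈ SF, ∀ s ∈ S, dot f s ≤ dot f p := by
    intro p hp s hs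
    exact (hfF (hSFF (Finset.mem_coe.mpr hp))).2 s (hSP s hs)
  have hpmaxG : ∀ q ∈ SG, ∀ s ∈ S, dot c s ≤ dot c q := by
    intro q hq s hs
    exact (hcG (hSGG (Finset.mem_coe.mpr hq))).2 s (hSP s hs)
  -- slack quantities
  set QF : Finset ℝ := ((SF ×ˢ S).filter (fun pr => pr.2 ∉ S1)).image
    (fun pr => (dot f pr.1 - dot f pr.2) / (1 + |dot d (pr.2 - pr.1)|)) with hQFdef
  set QG : Finset ℝ := ((SG ×ˢ S).filter (fun pr => pr.2 ∉ S2)).image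
    (fun pr => (dot c pr.1 - dot c pr.2) / (1 + |dot d (pr.2 - pr.1)|)) with hQGdef
  set Q : Finset ℝ := insert 1 (QF ∪ QG) with hQdef
  have hQne : Q.Nonempty := ⟨1, Finset.mem_insert_self _ _⟩
  set δ := Q.min' hQne with hδdef
  -- strict slack for non-tight vertices
  have hslackF : ∀ pr : Vec n × Vec n, pr ∈ (SF ×ˢ S).filter (fun pr => pr.2 ∉ S1) →
      0 < dot f pr.1 - dot f pr.2 := by
    rintro ⟨p, s⟩ hpr
    rw [Finset.mem_filter, Finset.mem_product] at hpr
    obtain ⟨⟨hp, hs⟩, hns⟩ := hpr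
    rw [hS1def, Finset.mem_filter] at hns
    push_neg at hns
    obtain ⟨s', hs', hlt⟩ := hns hs
    have h1 : dot f s' ≤ dot f p := hpmaxF p hp s' hs'
    simp only [sub_pos]
    linarith
  have hslackG : ∀ pr : Vec n × Vec n, pr ∈ (SG ×ˢ S).filter (fun pr => pr.2 ∉ S2) →
      0 < dot c pr.1 - dot c pr.2 := by
    rintro ⟨q, s⟩ hpr
    rw [Finset.mem_filter, Finset.mem_product] at hpr
    obtain ⟨⟨hq, hs⟩, hns⟩ := hpr
    rw [hS2def, Finset.mem_filter] at hns
    push_neg at hns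
    obtain ⟨s', hs', hlt⟩ := hns hs
    have h1 : dot c s' ≤ dot c q := hpmaxG q hq s' hs'
    simp only [sub_pos]
    linarith
  have hδpos : 0 < δ := by
    rw [hδdef]
    apply lt_of_lt_of_le _ (le_refl (Q.min' hQne))
    have : ∀ a ∈ Q, 0 < a := by
      intro a ha
      rw [hQdef, Finset.mem_insert] at ha
      rcases ha with rfl | ha
      · exact one_pos
      rw [Finset.mem_union] at ha
      rcases ha with ha | ha
      · obtain ⟨pr, hpr, rfl⟩ := Finset.mem_image.mp ha
        exact div_pos (hslackF pr hpr) (by positivity)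
      · obtain ⟨pr, hpr, rfl⟩ := Finset.mem_image.mp ha
        exact div_pos (hslackG pr hpr) (by positivity)
    exact this _ (Q.min'_mem hQne)
  -- master inequality
  have hkey : ∀ (g : Vec n) (p s : Vec n),
      ((dot g p = dot g s ∧ dot d (s - p) ≤ 0) ∨
        (δ ≤ (dot g p - dot g s) / (1 + |dot d (s - p)|) ∧ dot g s < dot g p)) →
      dot (g + δ • d) s ≤ dot (g + δ • d) p := by
    intro g p s hcase
    rw [dot_add_left, dot_add_left, dot_smul_left, dot_smul_left]
    have hw := dot_sub_right d s p
    rcases hcase with ⟨heq, hd0⟩ | ⟨hδle, hlt⟩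
    · have := mul_nonpos_of_nonneg_of_nonpos hδpos.le hd0
      rw [hw] at this
      linarith
    · have habs : dot d (s - p) ≤ |dot d (s - p)| := le_abs_self _
      have h1 : (0:ℝ) < 1 + |dot d (s - p)| := by positivity
      rw [le_div_iff₀ h1] at hδle
      have h3 : δ * dot d (s - p) ≤ δ * |dot d (s - p)| :=
        mul_le_mul_of_nonneg_left habs hδpos.le
      have h4 : δ * |dot d (s - p)| ≤ δ * (1 + |dot d (s - p)|) :=
        mul_le_mul_of_nonneg_left (by linarith) hδpos.le
      rw [hw] at h3 h4 hδle
      linarith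
  refine ⟨δ, hδpos, ?_, ?_⟩
  · rw [normalCone_iff hS hSFsub hSFF hFhull]
    intro p hp s hs
    apply hkey
    by_cases hsS1 : s ∈ S1
    · left
      constructor
      · have h1 := hpmaxF p hp s hs
        have h2 : dot f p ≤ dot f s := (Finset.mem_filter.mp hsS1).2 p (hSFsub hp)
        linarith
      · exact hdF p hp s hsS1
    · right
      constructor
      · apply Q.min'_le
        rw [hQdef, Finset.mem_insert]
        right
        rw [Finset.mem_union]
        left
        rw [hQFdef]
        exact Finset.mem_image.mpr ⟨(p, s),
          Finset.mem_filter.mpr ⟨Finset.mem_product.mpr ⟨hp, hs⟩, hsS1⟩, rfl⟩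
      · have := hslackF (p, s)
          (Finset.mem_filter.mpr ⟨Finset.mem_product.mpr ⟨hp, hs⟩, hsS1⟩)
        simpa [sub_pos] using this
  · rw [normalCone_iff hS hSGsub hSGG hGhull]
    intro q hq s hs
    apply hkey
    by_cases hsS2 : s ∈ S2
    · left
      constructor
      · have h1 := hpmaxG q hq s hs
        have h2 : dot c q ≤ dot c s := (Finset.mem_filter.mp hsS2).2 q (hSGsub hq)
        linarith
      · exact hdG q hq s hsS2
    · right
      constructor
      · apply Q.min'_le
        rw [hQdef, Finset.mem_insert]
        right
        rw [Finset.mem_union]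
        right
        rw [hQGdef]
        exact Finset.mem_image.mpr ⟨(q, s),
          Finset.mem_filter.mpr ⟨Finset.mem_product.mpr ⟨hq, hs⟩, hsS2⟩, rfl⟩
      · have := hslackG (q, s)
          (Finset.mem_filter.mpr ⟨Finset.mem_product.mpr ⟨hq, hs⟩, hsS2⟩)
        simpa [sub_pos] using this

end Perturb

end Stmt2Aux
namespace Stmt2Aux

section Part3Main

variable {n : ℕ}

lemma dot_eq_on_face {P F : Set (Vec n)} {g : Vec n} (hg : g ∈ normalCone P F)
    {x x' : Vec n} (hx : x ∈ F) (hx' : x' ∈ F) : dot g (x - x') = 0 := by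
  have h1 := (hg hx).2 x' (hg hx').1
  have h2 := (hg hx').2 x (hg hx).1
  rw [dot_sub_right]; linarith

lemma finrankVec : Module.finrank ℝ (Vec n) = n := by simp [Module.finrank_pi]

lemma part3 {S : Finset (Vec n)} {P F G : Set (Vec n)} (v : Vec n)
    (hS : P = convexHull ℝ (S : Set (Vec n)))
    (hF : IsFace P F) (hG : IsFace P G) (hFne : F.Nonempty) (hGne : G.Nonempty)
    (hdim : sdim P = n) (tight : TightSub P v) (hIn : InFphi P v F G)
    {ε : ℝ} (hε : 0 < ε) :
    (sdim F + sdim G = sdim P ↔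
      sdim (((fun f => f + ε • v) '' normalCone P F) ∩ normalCone P G) = 0) := by
  classical
  obtain ⟨cF, hFdef⟩ := hF
  obtain ⟨cG, hGdef⟩ := hG
  obtain ⟨SF, hSFsub, hSFne, hSFF, hFhull⟩ := face_repr hS cF hFdef hFne
  obtain ⟨SG, hSGsub, hSGne, hSGG, hGhull⟩ := face_repr hS cG hGdef hGne
  set K := (((fun f => f + ε • v) '' normalCone P F) ∩ normalCone P G) with hKdef
  have hKmem : ∀ c : Vec n, c ∈ K ↔
      (c - ε • v ∈ normalCone P F ∧ c ∈ normalCone P G) := by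
    intro c
    constructor
    · rintro ⟨⟨f, hf, rfl⟩, hc⟩
      exact ⟨by simpa [add_sub_cancel_right] using hf, hc⟩
    · rintro ⟨h1, h2⟩
      exact ⟨⟨c - ε • v, h1, sub_add_cancel c (ε • v)⟩, h2⟩
  constructor
  · -- forward
    intro hFG
    have havg := tight F G ⟨cF, hFdef⟩ ⟨cG, hGdef⟩ hFne hGne hIn
    have htop : vectorSpan ℝ (avgSet F G) = ⊤ := by
      apply Submodule.eq_top_of_finrank_eq
      rw [← sdim_eq, ← havg, hFG, hdim, finrankVec]
    have hsub : Set.Subsingleton K := by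
      intro c hc c' hc'
      rw [hKmem] at hc hc'
      set d := c - c' with hddef
      have hle : vectorSpan ℝ (avgSet F G) ≤ LinearMap.ker (dotL d) := by
        rw [vectorSpan_def, Submodule.span_le]
        rintro w' hw'
        rw [Set.mem_vsub] at hw'
        obtain ⟨z, hz, z', hz', rfl⟩ := hw'
        obtain ⟨x, hx, y, hy, rfl⟩ := hz
        obtain ⟨x', hx', y', hy', rfl⟩ := hz'
        rw [SetLike.mem_coe, LinearMap.mem_ker]
        have hxx : dot d (x - x') = 0 := by
          have e1 : dot (c - ε • v) (x - x') = 0 := dot_eq_on_face hc.1 hx hx'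
          have e2 : dot (c' - ε • v) (x - x') = 0 := dot_eq_on_face hc'.1 hx hx'
          have e3 : dot ((c - ε • v) - (c' - ε • v)) (x - x') = 0 := by
            rw [dot_sub_left, e1, e2, sub_zero]
          rwa [sub_sub_sub_cancel_right] at e3
        have hyy : dot d (y - y') = 0 := by
          have e1 : dot c (y - y') = 0 := dot_eq_on_face hc.2 hy hy'
          have e2 : dot c' (y - y') = 0 := dot_eq_on_face hc'.2 hy hy'
          rw [hddef, dot_sub_left, e1, e2, sub_zero]
        have heq : (1/2 : ℝ) • (x + y) -ᵥ (1/2 : ℝ) • (x' + y')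
            = (1/2 : ℝ) • (x - x') + (1/2 : ℝ) • (y - y') := by
          rw [vsub_eq_sub]; module
        rw [heq, dotL_apply, dot_add_right, dot_smul_right, dot_smul_right, hxx, hyy]
        ring
      have hdd : dot d d = 0 := by
        have := hle (htop ▸ Submodule.mem_top : d ∈ vectorSpan ℝ (avgSet F G))
        rw [LinearMap.mem_ker, dotL_apply] at this
        exact this
      have := dot_self_eq_zero hdd
      exact sub_eq_zero.mp this
    have hbot : vectorSpan ℝ K ≤ ⊥ := by
      rw [vectorSpan_def, Submodule.span_le]
      rintro w hw
      rw [Set.mem_vsub] at hw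
      obtain ⟨z, hz, z', hz', rfl⟩ := hw
      have : z = z' := hsub hz hz'
      simp [this, vsub_eq_sub]
    rw [sdim_eq, le_bot_iff.mp hbot]
    exact finrank_bot ℝ (Vec n)
  · -- backward
    intro hK0
    obtain ⟨f0, hf0F, hf0G⟩ := exists_normal_pair v hS hSFsub hSFF hFhull hSGsub hSGG hGhull
      hε hIn
    set c : Vec n := f0 + ε • v with hcdef
    have hceq : c - ε • v = f0 := add_sub_cancel_right f0 (ε • v)
    have hcK : c ∈ K := (hKmem c).mpr ⟨by rwa [hceq], hf0G⟩
    have hKsub : Set.Subsingleton K := by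
      intro a ha b hb
      have hfin : Module.finrank ℝ (vectorSpan ℝ K) = 0 := by rw [← sdim_eq]; exact hK0
      have hbot : vectorSpan ℝ K = ⊥ := Submodule.finrank_eq_zero.mp hfin
      have hmem := vsub_mem_vectorSpan ℝ ha hb
      rw [hbot, Submodule.mem_bot] at hmem
      rw [vsub_eq_sub] at hmem
      exact sub_eq_zero.mp hmem
    set S1 := S.filter (fun s => ∀ s' ∈ S, dot f0 s' ≤ dot f0 s) with hS1def
    set S2 := S.filter (fun s => ∀ s' ∈ S, dot c s' ≤ dot c s) with hS2def
    set F' : Set (Vec n) := {x ∈ P | ∀ y ∈ P, dot f0 y ≤ dot f0 x} with hF'def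
    set G' : Set (Vec n) := {x ∈ P | ∀ y ∈ P, dot c y ≤ dot c x} with hG'def
    have hFF' : F ⊆ F' := fun x hx => hf0F hx
    have hGG' : G ⊆ G' := fun x hx => hf0G hx
    have hF'ne : F'.Nonempty := hFne.imp (fun x hx => hFF' hx)
    have hG'ne : G'.Nonempty := hGne.imp (fun x hx => hGG' hx)
    obtain ⟨hS1ne, hS1F', hF'hull⟩ := face_repr_filter hS f0 hF'def hF'ne
    obtain ⟨hS2ne, hS2G', hG'hull⟩ := face_repr_filter hS c hG'def hG'ne
    have hf0F' : f0 ∈ normalCone P F' := fun x hx => hx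
    have hcG' : c ∈ normalCone P G' := fun x hx => hx
    have hInF'G' : InFphi P v F' G' := inFphi_of_witness hε hf0F' hcG'
    have havg' := tight F' G' ⟨f0, hF'def⟩ ⟨c, hG'def⟩ hF'ne hG'ne hInF'G'
    have hUW : vectorSpan ℝ F' ⊓ vectorSpan ℝ G' = ⊥ := by
      have h1 : Module.finrank ℝ ((vectorSpan ℝ F' ⊔ vectorSpan ℝ G' : Submodule ℝ (Vec n)))
            + Module.finrank ℝ ((vectorSpan ℝ F' ⊓ vectorSpan ℝ G' : Submodule ℝ (Vec n)))
          = Module.finrank ℝ (vectorSpan ℝ F') + Module.finrank ℝ (vectorSpan ℝ G') :=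
        Submodule.finrank_sup_add_finrank_inf_eq (vectorSpan ℝ F') (vectorSpan ℝ G')
      have h2 : sdim (avgSet F' G') =
          Module.finrank ℝ ((vectorSpan ℝ F' ⊔ vectorSpan ℝ G' : Submodule ℝ (Vec n))) := by
        rw [sdim_eq, vectorSpan_avgSet hF'ne hG'ne]
      rw [sdim_eq, sdim_eq, h2] at havg'
      have hinf0 : Module.finrank ℝ
          ((vectorSpan ℝ F' ⊓ vectorSpan ℝ G' : Submodule ℝ (Vec n))) = 0 := by omega
      exact Submodule.finrank_eq_zero.mp hinf0
    -- the perturbation template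
    have hperp : ∀ d : Vec n, (∀ p ∈ SF, ∀ s ∈ S1, dot d (s - p) ≤ 0) →
        (∀ q ∈ SG, ∀ s ∈ S2, dot d (s - q) ≤ 0) → d = 0 := by
      intro d hdF hdG
      obtain ⟨δ, hδpos, h1, h2⟩ := perturb hS hSFsub hSFF hFhull hSGsub hSGG hGhull
        hf0F hf0G d hdF hdG
      have hcK' : c + δ • d ∈ K := by
        rw [hKmem]
        constructor
        · have : c + δ • d - ε • v = f0 + δ • d := by rw [hcdef]; module
          rwa [this]
        · exact h2
      have := hKsub hcK' hcK
      have hδd : δ • d = 0 := by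
        have h3 : c + δ • d = c + 0 := by rw [this, add_zero]
        exact add_left_cancel h3
      rcases smul_eq_zero.mp hδd with h | h
      · exact absurd h hδpos.ne'
      · exact h
    have hSP : ∀ s ∈ S, s ∈ P := fun s hs => hS ▸ subset_convexHull ℝ _ hs
    -- maximality of points of F for cF
    have hcFmax : ∀ p ∈ F, ∀ y ∈ P, dot cF y ≤ dot cF p := by
      intro p hp y hy
      rw [hFdef] at hp
      exact hp.2 y hy
    have hcGmax : ∀ q ∈ G, ∀ y ∈ P, dot cG y ≤ dot cG q := by
      intro q hq y hy
      rw [hGdef] at hq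
      exact hq.2 y hy
    -- Step A
    have hS1F : (S1 : Set (Vec n)) ⊆ F := by
      intro sstar hsstar
      by_contra hnF
      obtain ⟨d, hdU, hdW⟩ := exists_perp_dual (vectorSpan ℝ F') (vectorSpan ℝ G') hUW cF
      have hd0 : d = 0 := by
        apply hperp d
        · intro p hp s hs
          have hsF' : (s : Vec n) ∈ F' := hS1F' (Finset.mem_coe.mpr hs)
          have hpF' : (p : Vec n) ∈ F' := hFF' (hSFF (Finset.mem_coe.mpr hp))
          have hmem : s - p ∈ vectorSpan ℝ F' := by
            have := vsub_mem_vectorSpan ℝ hsF' hpF'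
            rwa [vsub_eq_sub] at this
          rw [hdU _ hmem]
          have := hcFmax p (hSFF (Finset.mem_coe.mpr hp)) s (hSP s (Finset.mem_of_mem_filter s hs))
          rw [dot_sub_right]
          linarith
        · intro q hq s hs
          have hsG' : (s : Vec n) ∈ G' := hS2G' (Finset.mem_coe.mpr hs)
          have hqG' : (q : Vec n) ∈ G' := hGG' (hSGG (Finset.mem_coe.mpr hq))
          have hmem : s - q ∈ vectorSpan ℝ G' := by
            have := vsub_mem_vectorSpan ℝ hsG' hqG'
            rwa [vsub_eq_sub] at this
          rw [hdW _ hmem]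
      obtain ⟨p₀, hp₀⟩ := hSFne
      have hsP : sstar ∈ P := hSP sstar (Finset.mem_of_mem_filter sstar hsstar)
      have hstrict : dot cF sstar < dot cF p₀ := by
        have : ¬ (sstar ∈ P ∧ ∀ y ∈ P, dot cF y ≤ dot cF sstar) := fun h => hnF (hFdef ▸ h)
        push_neg at this
        obtain ⟨y, hy, hlt⟩ := this hsP
        have := hcFmax p₀ (hSFF (Finset.mem_coe.mpr hp₀)) y hy
        linarith
      have hmem : sstar - p₀ ∈ vectorSpan ℝ F' := by
        have := vsub_mem_vectorSpan ℝ (hS1F' (Finset.mem_coe.mpr hsstar))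
          (hFF' (hSFF (Finset.mem_coe.mpr hp₀)))
        rwa [vsub_eq_sub] at this
      have := hdU _ hmem
      rw [hd0, dot_zero_left] at this
      rw [dot_sub_right] at this
      linarith
    have hS2G : (S2 : Set (Vec n)) ⊆ G := by
      intro sstar hsstar
      by_contra hnG
      obtain ⟨d, hdU, hdW⟩ := exists_perp_dual (vectorSpan ℝ G') (vectorSpan ℝ F')
        (by rwa [inf_comm] at hUW) cG
      have hd0 : d = 0 := by
        apply hperp d
        · intro p hp s hs
          have hsF' : (s : Vec n) ∈ F' := hS1F' (Finset.mem_coe.mpr hs)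
          have hpF' : (p : Vec n) ∈ F' := hFF' (hSFF (Finset.mem_coe.mpr hp))
          have hmem : s - p ∈ vectorSpan ℝ F' := by
            have := vsub_mem_vectorSpan ℝ hsF' hpF'
            rwa [vsub_eq_sub] at this
          rw [hdW _ hmem]
        · intro q hq s hs
          have hsG' : (s : Vec n) ∈ G' := hS2G' (Finset.mem_coe.mpr hs)
          have hqG' : (q : Vec n) ∈ G' := hGG' (hSGG (Finset.mem_coe.mpr hq))
          have hmem : s - q ∈ vectorSpan ℝ G' := by
            have := vsub_mem_vectorSpan ℝ hsG' hqG'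
            rwa [vsub_eq_sub] at this
          rw [hdU _ hmem]
          have := hcGmax q (hSGG (Finset.mem_coe.mpr hq)) s (hSP s (Finset.mem_of_mem_filter s hs))
          rw [dot_sub_right]
          linarith
      obtain ⟨q₀, hq₀⟩ := hSGne
      have hsP : sstar ∈ P := hSP sstar (Finset.mem_of_mem_filter sstar hsstar)
      have hstrict : dot cG sstar < dot cG q₀ := by
        have : ¬ (sstar ∈ P ∧ ∀ y ∈ P, dot cG y ≤ dot cG sstar) := fun h => hnG (hGdef ▸ h)
        push_neg at this
        obtain ⟨y, hy, hlt⟩ := this hsP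
        have := hcGmax q₀ (hSGG (Finset.mem_coe.mpr hq₀)) y hy
        linarith
      have hmem : sstar - q₀ ∈ vectorSpan ℝ G' := by
        have := vsub_mem_vectorSpan ℝ (hS2G' (Finset.mem_coe.mpr hsstar))
          (hGG' (hSGG (Finset.mem_coe.mpr hq₀)))
        rwa [vsub_eq_sub] at this
      have := hdU _ hmem
      rw [hd0, dot_zero_left] at this
      rw [dot_sub_right] at this
      linarith
    -- Step B
    have hsuptop : vectorSpan ℝ F ⊔ vectorSpan ℝ G = ⊤ := by
      by_contra hne
      obtain ⟨d, hd0, hdperp⟩ := exists_dot_perp_ne _ hne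
      apply hd0
      apply hperp d
      · intro p hp s hs
        have hsF : (s : Vec n) ∈ F := hS1F (Finset.mem_coe.mpr hs)
        have hpF : (p : Vec n) ∈ F := hSFF (Finset.mem_coe.mpr hp)
        have hmem : s - p ∈ vectorSpan ℝ F ⊔ vectorSpan ℝ G := by
          apply Submodule.mem_sup_left
          have := vsub_mem_vectorSpan ℝ hsF hpF
          rwa [vsub_eq_sub] at this
        rw [hdperp _ hmem]
      · intro q hq s hs
        have hsG : (s : Vec n) ∈ G := hS2G (Finset.mem_coe.mpr hs)
        have hqG : (q : Vec n) ∈ G := hSGG (Finset.mem_coe.mpr hq)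
        have hmem : s - q ∈ vectorSpan ℝ F ⊔ vectorSpan ℝ G := by
          apply Submodule.mem_sup_right
          have := vsub_mem_vectorSpan ℝ hsG hqG
          rwa [vsub_eq_sub] at this
        rw [hdperp _ hmem]
    have hfinal := tight F G ⟨cF, hFdef⟩ ⟨cG, hGdef⟩ hFne hGne hIn
    rw [hfinal, hdim, sdim_eq, vectorSpan_avgSet hFne hGne, hsuptop, finrank_top ℝ (Vec n),
      finrankVec]

end Part3Main

end Stmt2Aux
open Stmt2Aux in
/-- `(F,G) ∈ F^φ` iff `(N_P(F) + εv) ∩ N_P(G) ≠ ∅` for all `ε > 0`, iff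
`N_P(F) ∩ (N_P(G) - εv) ≠ ∅` for all `ε > 0`. Moreover, if `P` is full-dimensional and the
coherent subdivision `π(F^φ)` is tight, a pair `(F,G) ∈ F^φ` satisfies
`dim F + dim G = dim P` iff the intersection `(N_P(F) + εv) ∩ N_P(G)` has dimension zero. -/
theorem stmt2 {n : ℕ} (P : Set (Vec n)) (v : Vec n) (F G : Set (Vec n))
    (hP : IsPolytope P) (hF : IsFace P F) (hG : IsFace P G)
    (hFne : F.Nonempty) (hGne : G.Nonempty) :
    (InFphi P v F G ↔
      ∀ ε : ℝ, 0 < ε → (((fun f => f + ε • v) '' normalCone P F) ∩ normalCone P G).Nonempty) ∧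
    (InFphi P v F G ↔
      ∀ ε : ℝ, 0 < ε → (normalCone P F ∩ ((fun g => g - ε • v) '' normalCone P G)).Nonempty) ∧
    (sdim P = n → TightSub P v → InFphi P v F G → ∀ ε : ℝ, 0 < ε →
      (sdim F + sdim G = sdim P ↔
        sdim (((fun f => f + ε • v) '' normalCone P F) ∩ normalCone P G) = 0)) := by
  obtain ⟨S, hS⟩ := hP
  obtain ⟨cF, hFdef⟩ := hF
  obtain ⟨cG, hGdef⟩ := hG
  obtain ⟨SF, hSFsub, hSFne, hSFF, hFhull⟩ := face_repr hS cF hFdef hFne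
  obtain ⟨SG, hSGsub, hSGne, hSGG, hGhull⟩ := face_repr hS cG hGdef hGne
  have part1 : InFphi P v F G ↔
      ∀ ε : ℝ, 0 < ε → (((fun f => f + ε • v) '' normalCone P F) ∩ normalCone P G).Nonempty := by
    constructor
    · intro hIn ε hε
      obtain ⟨f, h1, h2⟩ := exists_normal_pair v hS hSFsub hSFF hFhull hSGsub hSGG hGhull hε hIn
      exact ⟨f + ε • v, ⟨f, h1, rfl⟩, h2⟩
    · intro h
      obtain ⟨c, hcim, hc⟩ := h 1 one_pos
      obtain ⟨f, hf, hfe⟩ := hcim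
      simp only at hfe
      subst hfe
      exact inFphi_of_witness one_pos hf hc
  have part2iff : ∀ ε : ℝ, 0 < ε →
      ((((fun f => f + ε • v) '' normalCone P F) ∩ normalCone P G).Nonempty ↔
        (normalCone P F ∩ ((fun g => g - ε • v) '' normalCone P G)).Nonempty) := by
    intro ε hε
    constructor
    · rintro ⟨c, ⟨f, hf, hfe⟩, hc⟩
      simp only at hfe
      refine ⟨f, hf, ⟨c, hc, ?_⟩⟩
      simp only
      rw [← hfe]
      exact add_sub_cancel_right f (ε • v)
    · rintro ⟨f, hf, ⟨g, hg, hge⟩⟩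
      simp only at hge
      refine ⟨g, ⟨f, hf, ?_⟩, hg⟩
      simp only
      rw [← hge]
      exact sub_add_cancel g (ε • v)
  refine ⟨part1, ?_, ?_⟩
  · rw [part1]
    constructor
    · intro h ε hε
      exact (part2iff ε hε).mp (h ε hε)
    · intro h ε hε
      exact (part2iff ε hε).mpr (h ε hε)
  · intro hdim tight hIn ε hε
    exact part3 v hS ⟨cF, hFdef⟩ ⟨cG, hGdef⟩ hFne hGne hdim tight hIn hε
end
end
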